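/- arXiv:1003.0305 — 3 statements merged into one kernel-verified Lean document; each statement's English description precedes it below -/
import Mathlib

section
/- Let S be an asymptotically compact semiflow on a complete metric space X and let 𝒜 be an attractor with attraction basin Ω = Ω(𝒜). Then for any δ > 0 such that the closed δ-neighborhood K = cl B(𝒜,δ) satisfies K ⊂⊂ Ω, there exists a continuous function V : X → ℝ such that: V = 0 on 𝒜; 0 < V(x) ≤ 1 for x ∉ cl B(𝒜,δ); V = 1 on X \ Ω; and D⁺V(x) ≤ −v(x) for all x ∈ X, where v : X → [0,∞) is a continuous function with 0 < v(x) ≤ 1 for x ∈ Ω \ cl B(𝒜,δ) and v(x) = 0 for x ∉ Ω \ 𝒜. -/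
open Metric Set Filter Topology Bornology

/-- A semiflow on a metric space `X`: a map `S : [0,∞) × X → X`, continuous on
`[0,∞) × X`, with `S 0 x = x` and `S (t+s) x = S t (S s x)` for `t, s ≥ 0`. -/
structure Semiflow (X : Type*) [MetricSpace X] where
  toFun : ℝ → X → X
  continuousOn : ContinuousOn (fun p : ℝ × X => toFun p.1 p.2) (Set.Ici (0:ℝ) ×ˢ Set.univ)
  map_zero : ∀ x, toFun 0 x = x
  map_add : ∀ (t s : ℝ), 0 ≤ t → 0 ≤ s → ∀ x, toFun (t + s) x = toFun t (toFun s x)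

namespace Semiflow

variable {X : Type*} [MetricSpace X] (φ : Semiflow X)

/-- Asymptotic compactness: every bounded sequence `x n`, with times `t n → ∞`,
such that `S (t n) (x n)` is bounded, has a convergent subsequence of images. -/
def AsympCompact : Prop :=
  ∀ (x : ℕ → X) (t : ℕ → ℝ), (∀ n, 0 ≤ t n) →
    IsBounded (Set.range x) → Tendsto t atTop atTop →
    IsBounded (Set.range fun n => φ.toFun (t n) (x n)) →
    ∃ (y : X) (k : ℕ → ℕ), StrictMono k ∧
      Tendsto (fun n => φ.toFun (t (k n)) (x (k n))) atTop (𝓝 y)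

/-- `M` attracts `B`: for every `ε > 0` there is `T > 0` with
`S t B ⊆ B(M,ε)` for all `t > T`. -/
def Attracts (M B : Set X) : Prop :=
  ∀ ε > (0:ℝ), ∃ T > (0:ℝ), ∀ t > T, ∀ x ∈ B, infDist (φ.toFun t x) M < ε

/-- `M` is invariant: `S t M = M` for all `t ≥ 0`. -/
def Invariant (M : Set X) : Prop :=
  ∀ t ≥ (0:ℝ), φ.toFun t '' M = M

/-- An attractor: a compact invariant set attracting a neighborhood of itself. -/
def IsAttractor (A : Set X) : Prop :=
  IsCompact A ∧ φ.Invariant A ∧ ∃ U : Set X, A ⊆ interior U ∧ φ.Attracts A U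

/-- The attraction basin of `A`: points whose orbits converge to `A`. -/
def basin (A : Set X) : Set X :=
  {x | Tendsto (fun t : ℝ => infDist (φ.toFun t x) A) atTop (𝓝 0)}

/-- The ω-limit set of a set `A`. -/
def omegaLimit (A : Set X) : Set X :=
  {y | ∃ (x : ℕ → X) (t : ℕ → ℝ), (∀ n, x n ∈ A) ∧ (∀ n, 0 ≤ t n) ∧
    Tendsto t atTop atTop ∧ Tendsto (fun n => φ.toFun (t n) (x n)) atTop (𝓝 y)}

/-- A complete trajectory of the semiflow. -/
def IsCompleteTraj (γ : ℝ → X) : Prop :=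
  ∀ s t : ℝ, s ≤ t → γ t = φ.toFun (t - s) (γ s)

/-- ω-limit set of a complete trajectory. -/
def trajOmega (γ : ℝ → X) : Set X :=
  {y | ∃ t : ℕ → ℝ, Tendsto t atTop atTop ∧ Tendsto (fun n => γ (t n)) atTop (𝓝 y)}

/-- α-limit set of a complete trajectory. -/
def trajAlpha (γ : ℝ → X) : Set X :=
  {y | ∃ t : ℕ → ℝ, Tendsto t atTop atBot ∧ Tendsto (fun n => γ (t n)) atTop (𝓝 y)}

/-- The dual repeller of `A` inside `𝒜`. -/
def dualRepeller (𝒜 A : Set X) : Set X :=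
  {x ∈ 𝒜 | φ.omegaLimit {x} ∩ A = ∅}

/-- `A` is an attractor of the restricted semiflow on the invariant set `𝒜`:
`A ⊆ 𝒜` is compact, invariant, and attracts a relative neighborhood of itself in `𝒜`. -/
def IsAttractorIn (𝒜 A : Set X) : Prop :=
  A ⊆ 𝒜 ∧ IsCompact A ∧ φ.Invariant A ∧
    ∃ V : Set X, IsOpen V ∧ A ⊆ V ∧ φ.Attracts A (𝒜 ∩ V)

/-- `M 1, …, M l` is a Morse decomposition of `𝒜` with Morse filtration
`∅ = A 0 ⊊ A 1 ⊊ ⋯ ⊊ A l = 𝒜`. -/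
def IsMorseDecompositionWithFiltration (𝒜 : Set X) (l : ℕ) (M A : ℕ → Set X) : Prop :=
  A 0 = (∅ : Set X) ∧ A l = 𝒜 ∧
  (∀ k, 1 ≤ k → k ≤ l → φ.IsAttractorIn 𝒜 (A k)) ∧
  (∀ k, 1 ≤ k → k ≤ l → A (k - 1) ⊂ A k) ∧
  (∀ k, 1 ≤ k → k ≤ l → M k = A k ∩ φ.dualRepeller 𝒜 (A (k - 1)))

/-- `M 1, …, M l` is a Morse decomposition of `𝒜`. -/
def IsMorseDecomposition (𝒜 : Set X) (l : ℕ) (M : ℕ → Set X) : Prop :=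
  ∃ A : ℕ → Set X, φ.IsMorseDecompositionWithFiltration 𝒜 l M A

/-- The Dini derivative of `V` along the semiflow. -/
noncomputable def dini (V : X → ℝ) (x : X) : ℝ :=
  Filter.limsup (fun t : ℝ => (V (φ.toFun t x) - V x) / t) (𝓝[>] (0:ℝ))

end Semiflow

/-- `A ⊂⊂ B`: the closure of `A` is contained in the interior of `B` and
`dist (A, ∂B) > 0`. -/
def WayInside {X : Type*} [MetricSpace X] (A B : Set X) : Prop :=
  closure A ⊆ interior B ∧ ∃ δ > (0:ℝ), ∀ x ∈ A, ∀ y ∈ frontier B, δ ≤ dist x y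

/-- `V` is radially unbounded on the open set `Ω`. -/
def RadiallyUnbounded {X : Type*} [MetricSpace X] (V : X → ℝ) (Ω : Set X) : Prop :=
  ∀ R > (0:ℝ), ∃ B : Set X, IsBounded B ∧ IsClosed B ∧ B ⊆ Ω ∧ WayInside B Ω ∧
    ∀ x ∈ Ω \ B, R < V x

/-- `F` is a strong deformation retract of `E`. -/
def IsStrongDeformationRetract {X : Type*} [MetricSpace X] (F E : Set X) : Prop :=
  F ⊆ E ∧ ∃ H : ℝ × X → X, ContinuousOn H (Set.Icc (0:ℝ) 1 ×ˢ E) ∧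
    (∀ x ∈ E, H (0, x) = x) ∧ (∀ x ∈ E, H (1, x) ∈ F) ∧
    (∀ σ ∈ Set.Icc (0:ℝ) 1, ∀ x ∈ F, H (σ, x) = x) ∧
    (∀ σ ∈ Set.Icc (0:ℝ) 1, ∀ x ∈ E, H (σ, x) ∈ E)

namespace Semiflow

variable {X : Type*} [MetricSpace X] (φ : Semiflow X)

/-- A Morse–Lyapunov function of the Morse decomposition `M` on `Ω`. -/
def IsMorseLyapunov (Ω : Set X) (l : ℕ) (M : ℕ → Set X) (V : X → ℝ) : Prop :=
  ContinuousOn V Ω ∧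
  (∀ k, 1 ≤ k → k ≤ l → ∃ c : ℝ, ∀ x ∈ M k, V x = c) ∧
  (∀ x ∈ Ω \ ⋃ k ∈ Set.Icc 1 l, M k,
    StrictAntiOn (fun t : ℝ => V (φ.toFun t x)) (Set.Ici (0:ℝ)))

/-- A strict Morse–Lyapunov function: the values on the Morse sets are increasing. -/
def IsStrictMorseLyapunov (Ω : Set X) (l : ℕ) (M : ℕ → Set X) (V : X → ℝ) : Prop :=
  φ.IsMorseLyapunov Ω l M V ∧ ∃ c : ℕ → ℝ,
    (∀ k, 1 ≤ k → k ≤ l → ∀ x ∈ M k, V x = c k) ∧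
    (∀ j k, 1 ≤ j → j < k → k ≤ l → c j < c k)

end Semiflow


section Stmt12Aux

open MeasureTheory Real

variable {X : Type*} [MetricSpace X]

/-- Cut-off distance function. -/
noncomputable def sAw (𝒜 : Set X) (δ : ℝ) (x : X) : ℝ := min 1 (Metric.infDist x 𝒜 / δ)

/-- Supremum of `sAw` along the forward orbit. -/
noncomputable def sAg (φ : Semiflow X) (𝒜 : Set X) (δ : ℝ) (x : X) : ℝ :=
  ⨆ t : ℝ, sAw 𝒜 δ (φ.toFun (max t 0) x)

/-- Integrand for the Lyapunov function. -/
noncomputable def sAH (φ : Semiflow X) (𝒜 : Set X) (δ : ℝ) (x : X) (t : ℝ) : ℝ :=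
  Real.exp (-t) * sAg φ 𝒜 δ (φ.toFun (max t 0) x)

/-- The Lyapunov function. -/
noncomputable def sAV (φ : Semiflow X) (𝒜 : Set X) (δ : ℝ) (x : X) : ℝ :=
  ∫ t in Set.Ioi (0:ℝ), sAH φ 𝒜 δ x t

variable {𝒜 : Set X} {δ : ℝ} {φ : Semiflow X}

lemma sAw_nonneg (hδ : 0 < δ) (x : X) : 0 ≤ sAw 𝒜 δ x :=
  le_min zero_le_one (div_nonneg Metric.infDist_nonneg hδ.le)

lemma sAw_le_one (x : X) : sAw 𝒜 δ x ≤ 1 := min_le_left _ _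

lemma sAw_continuous : Continuous (sAw 𝒜 δ) :=
  continuous_const.min ((Metric.continuous_infDist_pt 𝒜).div_const δ)

lemma sAw_of_mem (hx : x ∈ 𝒜) : sAw 𝒜 δ x = 0 := by
  simp [sAw, Metric.infDist_zero_of_mem hx]

lemma sAw_of_far (hδ : 0 < δ) (h : δ ≤ Metric.infDist x 𝒜) : sAw 𝒜 δ x = 1 := by
  have : (1:ℝ) ≤ Metric.infDist x 𝒜 / δ := (one_le_div hδ).2 h
  simp [sAw, min_eq_left this]

lemma sAw_le_of_small (hδ : 0 < δ) {ε : ℝ} (h : Metric.infDist x 𝒜 ≤ ε * δ) :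
    sAw 𝒜 δ x ≤ ε :=
  (min_le_right _ _).trans ((div_le_iff₀ hδ).2 h)

lemma flowExt_continuous (φ : Semiflow X) :
    Continuous (fun p : ℝ × X => φ.toFun (max p.1 0) p.2) := by
  have hc : Continuous (fun p : ℝ × X => ((max p.1 0, p.2) : ℝ × X)) :=
    (continuous_fst.max continuous_const).prodMk continuous_snd
  exact φ.continuousOn.comp_continuous hc fun p => ⟨Set.mem_Ici.2 (le_max_right _ _), Set.mem_univ _⟩

lemma flow_continuous (φ : Semiflow X) {t : ℝ} (ht : 0 ≤ t) :
    Continuous (fun x => φ.toFun t x) := by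
  have heq : (fun x : X => φ.toFun t x) =
      (fun p : ℝ × X => φ.toFun (max p.1 0) p.2) ∘ (fun x => (t, x)) := by
    funext x; simp [max_eq_left ht]
  rw [heq]
  exact (flowExt_continuous φ).comp (continuous_const.prodMk continuous_id)

lemma sAg_bdd (x : X) : BddAbove (Set.range fun t : ℝ => sAw 𝒜 δ (φ.toFun (max t 0) x)) := by
  refine ⟨1, ?_⟩
  rintro _ ⟨t, rfl⟩
  exact sAw_le_one _

lemma sAw_le_sAg (t : ℝ) (ht : 0 ≤ t) (x : X) :
    sAw 𝒜 δ (φ.toFun t x) ≤ sAg φ 𝒜 δ x := by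
  have := le_ciSup (sAg_bdd (φ := φ) (𝒜 := 𝒜) (δ := δ) x) t
  simpa [sAg, Function.comp, max_eq_left ht] using this

lemma sAg_le {c : ℝ} (h : ∀ t, 0 ≤ t → sAw 𝒜 δ (φ.toFun t x) ≤ c) :
    sAg φ 𝒜 δ x ≤ c :=
  ciSup_le fun t => h (max t 0) (le_max_right _ _)

lemma sAg_nonneg (hδ : 0 < δ) (x : X) : 0 ≤ sAg φ 𝒜 δ x :=
  le_trans (sAw_nonneg hδ _) (sAw_le_sAg 0 le_rfl x)

lemma sAg_le_one (x : X) : sAg φ 𝒜 δ x ≤ 1 := sAg_le fun _ _ => sAw_le_one _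

lemma sAg_mono {s : ℝ} (hs : 0 ≤ s) (x : X) :
    sAg φ 𝒜 δ (φ.toFun s x) ≤ sAg φ 𝒜 δ x := by
  refine sAg_le fun t ht => ?_
  rw [← φ.map_add t s ht hs]
  exact sAw_le_sAg (t + s) (add_nonneg ht hs) x

lemma sAg_eq_zero (hδ : 0 < δ) (h : ∀ t, 0 ≤ t → φ.toFun t x ∈ 𝒜) :
    sAg φ 𝒜 δ x = 0 :=
  le_antisymm (sAg_le fun t ht => le_of_eq (sAw_of_mem (h t ht))) (sAg_nonneg hδ x)

lemma sAg_eq_one (hδ : 0 < δ) (h : δ ≤ Metric.infDist x 𝒜) :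
    sAg φ 𝒜 δ x = 1 := by
  refine le_antisymm (sAg_le_one x) ?_
  have h0 : sAw 𝒜 δ (φ.toFun 0 x) = 1 := by rw [φ.map_zero]; exact sAw_of_far hδ h
  calc (1:ℝ) = sAw 𝒜 δ (φ.toFun 0 x) := h0.symm
    _ ≤ sAg φ 𝒜 δ x := sAw_le_sAg 0 le_rfl x

lemma basin_negInv {s : ℝ} (hs : 0 ≤ s) {x : X}
    (h : φ.toFun s x ∈ φ.basin 𝒜) : x ∈ φ.basin 𝒜 := by
  have h' : Tendsto (fun u : ℝ => Metric.infDist (φ.toFun u (φ.toFun s x)) 𝒜)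
      atTop (nhds 0) := h
  have hsub : Tendsto (fun t : ℝ => t - s) atTop atTop :=
    tendsto_atTop_add_const_right atTop (-s) tendsto_id
  have h2 : Tendsto (fun t : ℝ => Metric.infDist (φ.toFun (t - s) (φ.toFun s x)) 𝒜)
      atTop (nhds 0) := h'.comp hsub
  refine h2.congr' ?_
  filter_upwards [eventually_ge_atTop s] with t ht
  rw [← φ.map_add (t - s) s (by linarith) hs, sub_add_cancel]

lemma inv_forward (hinv : φ.Invariant 𝒜) {x : X} (hx : x ∈ 𝒜) {t : ℝ} (ht : 0 ≤ t) :
    φ.toFun t x ∈ 𝒜 := by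
  have := hinv t ht
  rw [← this]
  exact ⟨x, hx, rfl⟩

lemma notMem_closure_far (hδ : 0 < δ) {x : X}
    (hx : x ∉ closure {y : X | Metric.infDist y 𝒜 < δ}) :
    δ ≤ Metric.infDist x 𝒜 := by
  by_contra h
  exact hx (subset_closure (by simpa using lt_of_not_ge h))

/-- Main continuity lemma for `sAg`. -/
lemma sAg_continuous (hδ : 0 < δ) (hne : 𝒜.Nonempty) (hcomp : IsCompact 𝒜)
    {U : Set X} (hU1 : 𝒜 ⊆ interior U) (hU2 : φ.Attracts 𝒜 U)
    (hK1 : closure {y : X | Metric.infDist y 𝒜 < δ} ⊆ φ.basin 𝒜) :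
    Continuous (sAg φ 𝒜 δ) := by
  rw [continuous_iff_continuousAt]
  intro x0
  rw [ContinuousAt, Metric.tendsto_nhds]
  intro ε hε
  -- it suffices to find a neighborhood where |sAg x - sAg x0| ≤ ε/2
  suffices h : ∀ᶠ x in nhds x0, |sAg φ 𝒜 δ x - sAg φ 𝒜 δ x0| ≤ ε / 2 by
    filter_upwards [h] with x hx
    rw [Real.dist_eq]
    linarith
  set ε' := ε / 2 with hε'def
  have hε' : 0 < ε' := by positivity
  by_cases hx0 : x0 ∈ φ.basin 𝒜
  · -- x0 in the basin
    obtain ⟨ε0, hε0, hthick⟩ :=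
      hcomp.exists_thickening_subset_open isOpen_interior hU1
    have hthick' : ∀ y : X, Metric.infDist y 𝒜 < ε0 → y ∈ U := by
      intro y hy
      exact interior_subset (hthick ((Metric.mem_thickening_iff_infDist_lt hne).2 hy))
    -- choose T0 with infDist (S T0 x0) 𝒜 < ε0
    have hx0' : Tendsto (fun t : ℝ => Metric.infDist (φ.toFun t x0) 𝒜) atTop (nhds 0) := hx0
    have : ∀ᶠ t : ℝ in atTop, Metric.infDist (φ.toFun t x0) 𝒜 < ε0 := by
      have := hx0' (Metric.ball_mem_nhds 0 hε0)
      filter_upwards [this] with t ht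
      have := mem_ball_iff_norm.1 ht
      rw [Real.norm_eq_abs] at this
      calc Metric.infDist (φ.toFun t x0) 𝒜 ≤ |Metric.infDist (φ.toFun t x0) 𝒜 - 0| := by
            rw [sub_zero]; exact le_abs_self _
        _ < ε0 := this
    obtain ⟨T0', hT0'⟩ := this.exists_forall_of_atTop
    set T0 : ℝ := max T0' 0 with hT0def
    have hT0nn : 0 ≤ T0 := le_max_right _ _
    have hT0 : Metric.infDist (φ.toFun T0 x0) 𝒜 < ε0 := hT0' T0 (le_max_left _ _)
    -- attraction gives a uniform tail time
    obtain ⟨T1, hT1pos, hT1⟩ := hU2 (ε' * δ) (by positivity)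
    set T : ℝ := T0 + T1 + 1 with hTdef
    have hTnn : 0 ≤ T := by linarith
    -- uniform tail estimate
    have tail : ∀ x : X, Metric.infDist (φ.toFun T0 x) 𝒜 < ε0 →
        ∀ t, T ≤ t → sAw 𝒜 δ (φ.toFun t x) ≤ ε' := by
      intro x hx t ht
      have hxU : φ.toFun T0 x ∈ U := hthick' _ hx
      have htt : φ.toFun t x = φ.toFun (t - T0) (φ.toFun T0 x) := by
        rw [← φ.map_add (t - T0) T0 (by linarith) hT0nn, sub_add_cancel]
      have hgt : t - T0 > T1 := by simp only [hTdef] at ht; linarith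
      have := hT1 (t - T0) hgt (φ.toFun T0 x) hxU
      rw [htt]
      exact sAw_le_of_small hδ this.le
    -- the neighborhood event for the tail
    have hNev : ∀ᶠ x in nhds x0, Metric.infDist (φ.toFun T0 x) 𝒜 < ε0 := by
      have hc : Continuous fun x => Metric.infDist (φ.toFun T0 x) 𝒜 :=
        (Metric.continuous_infDist_pt 𝒜).comp (flow_continuous φ hT0nn)
      exact (hc.tendsto x0).eventually (Filter.Tendsto.eventually_lt_const hT0 tendsto_id)
    -- the tube event: uniform closeness on [0, T]
    have hTube : ∀ᶠ x in nhds x0, ∀ t, 0 ≤ t → t ≤ T →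
        |sAw 𝒜 δ (φ.toFun t x) - sAw 𝒜 δ (φ.toFun t x0)| ≤ ε' := by
      have hq : Continuous fun p : X × Set.Icc (0:ℝ) T =>
          sAw 𝒜 δ (φ.toFun (max (p.2 : ℝ) 0) p.1) := by
        apply sAw_continuous.comp
        exact (flowExt_continuous φ).comp
          ((continuous_subtype_val.comp continuous_snd).prodMk continuous_fst)
      set q : C(X × Set.Icc (0:ℝ) T, ℝ) := ⟨_, hq⟩ with hqdef
      set F : C(X, C(Set.Icc (0:ℝ) T, ℝ)) := q.curry with hFdef
      have hF : Continuous F := F.continuous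
      have := (hF.tendsto x0) (Metric.ball_mem_nhds (F x0) hε')
      filter_upwards [this] with x hx t ht0 htT
      have hd : dist (F x) (F x0) < ε' := Metric.mem_ball.1 hx
      have := ContinuousMap.dist_apply_le_dist (f := F x) (g := F x0) ⟨t, ht0, htT⟩
      have h2 : dist (sAw 𝒜 δ (φ.toFun (max t 0) x)) (sAw 𝒜 δ (φ.toFun (max t 0) x0)) ≤
          dist (F x) (F x0) := this
      rw [max_eq_left ht0] at h2
      rw [← Real.dist_eq]
      linarith
    filter_upwards [hNev, hTube] with x hx htube
    have hub : ∀ y z : X, Metric.infDist (φ.toFun T0 y) 𝒜 < ε0 →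
        (∀ t, 0 ≤ t → t ≤ T → sAw 𝒜 δ (φ.toFun t y) ≤ sAw 𝒜 δ (φ.toFun t z) + ε') →
        sAg φ 𝒜 δ y ≤ sAg φ 𝒜 δ z + ε' := by
      intro y z hy hyz
      refine sAg_le fun t ht => ?_
      rcases le_or_gt t T with hle | hgt
      · exact (hyz t ht hle).trans (add_le_add_left (sAw_le_sAg t ht z) ε')
      · exact (tail y hy t hgt.le).trans (by
          have := sAg_nonneg (φ := φ) (𝒜 := 𝒜) (δ := δ) hδ z
          linarith)
    have h1 : sAg φ 𝒜 δ x ≤ sAg φ 𝒜 δ x0 + ε' := by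
      refine hub x x0 hx fun t ht0 htT => ?_
      have := htube t ht0 htT
      have := abs_le.1 this
      linarith [this.1, this.2]
    have h2 : sAg φ 𝒜 δ x0 ≤ sAg φ 𝒜 δ x + ε' := by
      refine hub x0 x hT0 fun t ht0 htT => ?_
      have := htube t ht0 htT
      have := abs_le.1 this
      linarith [this.1, this.2]
    rw [abs_le]
    constructor <;> linarith
  · -- x0 not in the basin: sAg = 1 near x0
    have hg1 : sAg φ 𝒜 δ x0 = 1 := by
      refine sAg_eq_one hδ ?_
      refine notMem_closure_far hδ fun hc => hx0 (hK1 hc)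
    have hcw : Continuous fun x => sAw 𝒜 δ x := sAw_continuous
    have hw1 : sAw 𝒜 δ x0 = 1 :=
      sAw_of_far hδ (notMem_closure_far hδ fun hc => hx0 (hK1 hc))
    have : ∀ᶠ x in nhds x0, 1 - ε' < sAw 𝒜 δ x := by
      have := (hcw.tendsto x0).eventually (Filter.Tendsto.eventually_const_lt
        (by rw [hw1]; linarith : 1 - ε' < sAw 𝒜 δ x0) tendsto_id)
      exact this
    filter_upwards [this] with x hx
    have hup : sAg φ 𝒜 δ x ≤ 1 := sAg_le_one x
    have hlo : 1 - ε' < sAg φ 𝒜 δ x := by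
      have h0 : sAw 𝒜 δ (φ.toFun 0 x) = sAw 𝒜 δ x := by rw [φ.map_zero]
      have := sAw_le_sAg (φ := φ) (𝒜 := 𝒜) (δ := δ) 0 le_rfl x
      rw [h0] at this
      linarith
    rw [hg1, abs_le]
    constructor <;> linarith

lemma sAH_continuous (hg : Continuous (sAg φ 𝒜 δ)) (x : X) :
    Continuous (sAH φ 𝒜 δ x) := by
  apply Continuous.mul
  · exact Real.continuous_exp.comp continuous_neg
  · exact hg.comp ((flowExt_continuous φ).comp
      (continuous_id.prodMk continuous_const))

lemma sAH_nonneg (hδ : 0 < δ) (x : X) (t : ℝ) : 0 ≤ sAH φ 𝒜 δ x t :=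
  mul_nonneg (Real.exp_pos _).le (sAg_nonneg hδ _)

lemma sAH_le_exp (x : X) (t : ℝ) : sAH φ 𝒜 δ x t ≤ Real.exp (-t) := by
  have := sAg_le_one (φ := φ) (𝒜 := 𝒜) (δ := δ) (φ.toFun (max t 0) x)
  calc sAH φ 𝒜 δ x t ≤ Real.exp (-t) * 1 :=
        mul_le_mul_of_nonneg_left this (Real.exp_pos _).le
    _ = Real.exp (-t) := mul_one _

lemma exp_neg_integrable : IntegrableOn (fun t : ℝ => Real.exp (-t)) (Set.Ioi (0:ℝ)) := by
  have := exp_neg_integrableOn_Ioi (0:ℝ) (b := 1) one_pos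
  simpa using this

lemma exp_neg_integrable' {s : ℝ} : IntegrableOn (fun t : ℝ => Real.exp (-t)) (Set.Ioi s) := by
  have := exp_neg_integrableOn_Ioi s (b := 1) one_pos
  simpa using this

lemma sAH_integrableOn (hδ : 0 < δ) (hg : Continuous (sAg φ 𝒜 δ)) (x : X) {s : Set ℝ}
    (hs : MeasurableSet s) (hsub : s ⊆ Set.Ioi (-1:ℝ)) :
    IntegrableOn (sAH φ 𝒜 δ x) s := by
  refine Integrable.mono
    ((exp_neg_integrable' (s := (-1:ℝ))).mono_set hsub)
    ((sAH_continuous hg x).aestronglyMeasurable.restrict) ?_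
  filter_upwards with t
  rw [Real.norm_eq_abs, Real.norm_eq_abs, abs_of_nonneg (sAH_nonneg hδ x t),
    abs_of_nonneg (Real.exp_pos _).le]
  exact sAH_le_exp x t

lemma sAV_nonneg (hδ : 0 < δ) (x : X) : 0 ≤ sAV φ 𝒜 δ x :=
  setIntegral_nonneg measurableSet_Ioi fun t _ => sAH_nonneg hδ x t

lemma sAV_le_sAg (hδ : 0 < δ) (hg : Continuous (sAg φ 𝒜 δ)) (x : X) :
    sAV φ 𝒜 δ x ≤ sAg φ 𝒜 δ x := by
  have h1 : sAV φ 𝒜 δ x ≤ ∫ t in Set.Ioi (0:ℝ), Real.exp (-t) * sAg φ 𝒜 δ x := by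
    refine setIntegral_mono_on
      (sAH_integrableOn hδ hg x measurableSet_Ioi
        (Set.Ioi_subset_Ioi (by norm_num)))
      (Integrable.mul_const exp_neg_integrable _)
      measurableSet_Ioi ?_
    intro t ht
    have ht' : (0:ℝ) ≤ t := (Set.mem_Ioi.1 ht).le
    have : sAg φ 𝒜 δ (φ.toFun (max t 0) x) ≤ sAg φ 𝒜 δ x := by
      rw [max_eq_left ht']
      exact sAg_mono ht' x
    exact mul_le_mul_of_nonneg_left this (Real.exp_pos _).le
  have h2 : ∫ t in Set.Ioi (0:ℝ), Real.exp (-t) * sAg φ 𝒜 δ x = sAg φ 𝒜 δ x := by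
    rw [integral_mul_const, integral_exp_neg_Ioi_zero, one_mul]
  linarith
  
lemma sAV_le_one (hδ : 0 < δ) (hg : Continuous (sAg φ 𝒜 δ)) (x : X) :
    sAV φ 𝒜 δ x ≤ 1 :=
  (sAV_le_sAg hδ hg x).trans (sAg_le_one x)

lemma sAV_of_const {c : ℝ} (h : ∀ t, 0 ≤ t → sAg φ 𝒜 δ (φ.toFun t x) = c) :
    sAV φ 𝒜 δ x = c := by
  have : ∀ t ∈ Set.Ioi (0:ℝ), sAH φ 𝒜 δ x t = Real.exp (-t) * c := by
    intro t ht
    have ht' : (0:ℝ) ≤ t := (Set.mem_Ioi.1 ht).le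
    rw [sAH, max_eq_left ht', h t ht']
  rw [sAV, setIntegral_congr_fun measurableSet_Ioi this, integral_mul_const,
    integral_exp_neg_Ioi_zero, one_mul]

lemma sAV_continuous (hδ : 0 < δ) (hg : Continuous (sAg φ 𝒜 δ)) :
    Continuous (sAV φ 𝒜 δ) := by
  rw [continuous_iff_continuousAt]
  intro x0
  refine continuousAt_of_dominated (bound := fun t => Real.exp (-t)) ?_ ?_ ?_ ?_
  · filter_upwards with x
    exact (sAH_continuous hg x).aestronglyMeasurable.restrict
  · filter_upwards with x
    filter_upwards with t
    rw [Real.norm_eq_abs, abs_of_nonneg (sAH_nonneg hδ x t)]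
    exact sAH_le_exp x t
  · exact exp_neg_integrable
  · filter_upwards with t
    apply Continuous.continuousAt
    apply Continuous.mul continuous_const
    exact hg.comp ((flowExt_continuous φ).comp
      (continuous_const.prodMk continuous_id))


lemma ioc_disj {a b : ℝ} : Disjoint (Set.Ioc a b) (Set.Ioi b) := by
  rw [Set.disjoint_left]
  rintro t ⟨_, ht2⟩ ht3
  exact absurd (Set.mem_Ioi.1 ht3) (not_lt.2 ht2)

lemma sAV_split (hδ : 0 < δ) (hg : Continuous (sAg φ 𝒜 δ)) (x : X) {T : ℝ} (hT : 0 ≤ T) :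
    sAV φ 𝒜 δ x = (∫ t in Set.Ioc (0:ℝ) T, sAH φ 𝒜 δ x t) + ∫ t in Set.Ioi T, sAH φ 𝒜 δ x t := by
  rw [sAV, ← Set.Ioc_union_Ioi_eq_Ioi hT]
  exact setIntegral_union ioc_disj measurableSet_Ioi
    (sAH_integrableOn hδ hg x measurableSet_Ioc
      (fun t ht => lt_of_lt_of_le (by norm_num) ht.1.le))
    (sAH_integrableOn hδ hg x measurableSet_Ioi
      (fun t ht => lt_of_le_of_lt (by linarith) (Set.mem_Ioi.1 ht)))

lemma exp_split {T : ℝ} (hT : 0 ≤ T) :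
    ∫ t in Set.Ioc (0:ℝ) T, Real.exp (-t) = 1 - Real.exp (-T) := by
  have h : (1:ℝ) = (∫ t in Set.Ioc (0:ℝ) T, Real.exp (-t)) + ∫ t in Set.Ioi T, Real.exp (-t) := by
    rw [← integral_exp_neg_Ioi_zero, ← Set.Ioc_union_Ioi_eq_Ioi hT]
    exact setIntegral_union ioc_disj measurableSet_Ioi
      (exp_neg_integrable'.mono_set Set.Ioc_subset_Ioi_self) exp_neg_integrable'
  rw [integral_exp_neg_Ioi] at h
  linarith

lemma sAg_small_tail (hδ : 0 < δ) {x : X} (hx : x ∈ φ.basin 𝒜) :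
    ∃ T : ℝ, 0 ≤ T ∧ ∀ t, T ≤ t → sAg φ 𝒜 δ (φ.toFun t x) ≤ 1/2 := by
  have hx' : Tendsto (fun t : ℝ => Metric.infDist (φ.toFun t x) 𝒜) atTop (nhds 0) := hx
  have hev : ∀ᶠ t : ℝ in atTop, Metric.infDist (φ.toFun t x) 𝒜 < δ/2 := by
    have := hx' (Metric.ball_mem_nhds 0 (by positivity : (0:ℝ) < δ/2))
    filter_upwards [this] with t ht
    have h2 := mem_ball_iff_norm.1 ht
    rw [Real.norm_eq_abs, sub_zero] at h2
    exact lt_of_le_of_lt (le_abs_self _) h2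
  obtain ⟨T', hT'⟩ := hev.exists_forall_of_atTop
  refine ⟨max T' 0, le_max_right _ _, fun t ht => ?_⟩
  have htnn : 0 ≤ t := le_trans (le_max_right _ _) ht
  refine sAg_le fun u hu => ?_
  rw [← φ.map_add u t hu htnn]
  refine sAw_le_of_small hδ ?_
  have := hT' (u + t) (le_trans (le_max_left _ _) (by linarith))
  linarith

lemma sAV_lt_one (hδ : 0 < δ) (hg : Continuous (sAg φ 𝒜 δ)) {x : X}
    (hx : x ∈ φ.basin 𝒜) : sAV φ 𝒜 δ x < 1 := by
  obtain ⟨T, hTnn, hT⟩ := sAg_small_tail hδ hx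
  have h1 : (∫ t in Set.Ioc (0:ℝ) T, sAH φ 𝒜 δ x t) ≤ 1 - Real.exp (-T) := by
    rw [← exp_split hTnn]
    refine setIntegral_mono_on
      (sAH_integrableOn hδ hg x measurableSet_Ioc
        (fun t ht => lt_of_lt_of_le (by norm_num) ht.1.le))
      (exp_neg_integrable'.mono_set Set.Ioc_subset_Ioi_self)
      measurableSet_Ioc (fun t _ => sAH_le_exp x t)
  have h2 : (∫ t in Set.Ioi T, sAH φ 𝒜 δ x t) ≤ Real.exp (-T) / 2 := by
    have heq : ∫ t in Set.Ioi T, Real.exp (-t) * (1/2 : ℝ) = Real.exp (-T) / 2 := by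
      rw [integral_mul_const, integral_exp_neg_Ioi]; ring
    rw [← heq]
    refine setIntegral_mono_on
      (sAH_integrableOn hδ hg x measurableSet_Ioi
        (fun t ht => lt_of_le_of_lt (by linarith) (Set.mem_Ioi.1 ht)))
      ((exp_neg_integrable' (s := T)).mul_const _)
      measurableSet_Ioi ?_
    intro t ht
    have ht' : T < t := Set.mem_Ioi.1 ht
    have htnn : 0 ≤ t := le_trans hTnn ht'.le
    have : sAg φ 𝒜 δ (φ.toFun (max t 0) x) ≤ 1/2 := by
      rw [max_eq_left htnn]; exact hT t ht'.le
    calc sAH φ 𝒜 δ x t ≤ Real.exp (-t) * (1/2) :=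
          mul_le_mul_of_nonneg_left this (Real.exp_pos _).le
      _ = Real.exp (-t) * (1/2) := rfl
  have hsplit := sAV_split hδ hg x hTnn
  have hexp : 0 < Real.exp (-T) := Real.exp_pos _
  rw [hsplit]
  linarith

lemma sAV_pos (hδ : 0 < δ) (hg : Continuous (sAg φ 𝒜 δ)) {x : X}
    (h1 : sAg φ 𝒜 δ x = 1) : 0 < sAV φ 𝒜 δ x := by
  have hGc : Continuous fun t : ℝ => sAg φ 𝒜 δ (φ.toFun (max t 0) x) :=
    hg.comp ((flowExt_continuous φ).comp (continuous_id.prodMk continuous_const))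
  have hG0 : sAg φ 𝒜 δ (φ.toFun (max (0:ℝ) 0) x) = 1 := by
    rw [max_self, φ.map_zero]; exact h1
  have hopen : {t : ℝ | 1/2 < sAg φ 𝒜 δ (φ.toFun (max t 0) x)} ∈ nhds (0:ℝ) := by
    apply (isOpen_lt continuous_const hGc).mem_nhds
    simp only [Set.mem_setOf_eq, hG0]
    norm_num
  obtain ⟨a, ha, hball⟩ := Metric.mem_nhds_iff.1 hopen
  set t0 : ℝ := a/2 with ht0def
  have ht0 : 0 < t0 := by positivity
  have hlow : ∀ t ∈ Set.Ioc (0:ℝ) t0, Real.exp (-t) * (1/2 : ℝ) ≤ sAH φ 𝒜 δ x t := by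
    intro t ht
    have : t ∈ Metric.ball (0:ℝ) a := by
      rw [Metric.mem_ball, Real.dist_eq, sub_zero, abs_of_nonneg ht.1.le]
      calc t ≤ t0 := ht.2
        _ < a := by rw [ht0def]; linarith
    have := hball this
    exact mul_le_mul_of_nonneg_left (le_of_lt this) (Real.exp_pos _).le
  have hsplit := sAV_split hδ hg x ht0.le
  have hfirst : (1 - Real.exp (-t0)) / 2 ≤ ∫ t in Set.Ioc (0:ℝ) t0, sAH φ 𝒜 δ x t := by
    have heq : ∫ t in Set.Ioc (0:ℝ) t0, Real.exp (-t) * (1/2 : ℝ) = (1 - Real.exp (-t0)) / 2 := by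
      rw [integral_mul_const, exp_split ht0.le]; ring
    rw [← heq]
    refine setIntegral_mono_on
      ((exp_neg_integrable'.mono_set Set.Ioc_subset_Ioi_self).mul_const _)
      (sAH_integrableOn hδ hg x measurableSet_Ioc
        (fun t ht => lt_of_lt_of_le (by norm_num) ht.1.le))
      measurableSet_Ioc hlow
  have hsecond : 0 ≤ ∫ t in Set.Ioi t0, sAH φ 𝒜 δ x t :=
    setIntegral_nonneg measurableSet_Ioi fun t _ => sAH_nonneg hδ x t
  have hexp : Real.exp (-t0) < 1 := by
    rw [Real.exp_lt_one_iff]; linarith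
  rw [hsplit]
  linarith

lemma integral_Ioi_shift (h : ℝ → ℝ) (s : ℝ) :
    ∫ t in Set.Ioi (0:ℝ), h (t + s) = ∫ u in Set.Ioi s, h u := by
  have hemb : MeasurableEmbedding (fun t : ℝ => t + s) :=
    (Homeomorph.addRight s).measurableEmbedding
  have hmp : MeasurePreserving (fun t : ℝ => t + s) volume volume :=
    measurePreserving_add_right volume s
  have hpre : (fun t : ℝ => t + s) ⁻¹' Set.Ioi s = Set.Ioi 0 := by
    ext t; simp
  have := hmp.setIntegral_preimage_emb hemb h (Set.Ioi s)
  rw [hpre] at this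
  exact this

lemma sAV_flow (hδ : 0 < δ) (hg : Continuous (sAg φ 𝒜 δ)) (x : X) {s : ℝ} (hs : 0 ≤ s) :
    sAV φ 𝒜 δ (φ.toFun s x) = Real.exp s * ∫ u in Set.Ioi s, sAH φ 𝒜 δ x u := by
  have step1 : sAV φ 𝒜 δ (φ.toFun s x)
      = ∫ t in Set.Ioi (0:ℝ), Real.exp s * sAH φ 𝒜 δ x (t + s) := by
    rw [sAV]
    refine setIntegral_congr_fun measurableSet_Ioi fun t ht => ?_
    have ht' : (0:ℝ) ≤ t := (Set.mem_Ioi.1 ht).le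
    have hts : (0:ℝ) ≤ t + s := by linarith
    rw [sAH, sAH, max_eq_left ht', max_eq_left hts, ← φ.map_add t s ht' hs]
    rw [show Real.exp s * (Real.exp (-(t+s)) * sAg φ 𝒜 δ (φ.toFun (t+s) x))
        = (Real.exp s * Real.exp (-(t+s))) * sAg φ 𝒜 δ (φ.toFun (t+s) x) by ring,
      ← Real.exp_add]
    norm_num
  rw [step1, integral_const_mul, integral_Ioi_shift]

lemma dini_sAV (hδ : 0 < δ) (hg : Continuous (sAg φ 𝒜 δ)) (x : X) :
    φ.dini (sAV φ 𝒜 δ) x = sAV φ 𝒜 δ x - sAg φ 𝒜 δ x := by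
  set h : ℝ → ℝ := sAH φ 𝒜 δ x with hhdef
  have hcont : Continuous h := sAH_continuous hg x
  set C : ℝ := sAV φ 𝒜 δ x with hCdef
  have key : ∀ s : ℝ, 0 ≤ s → (∫ u in Set.Ioi s, h u) = C - ∫ u in (0:ℝ)..s, h u := by
    intro s hs
    have hsplit := sAV_split hδ hg x hs
    rw [intervalIntegral.integral_of_le hs]
    rw [hCdef, hsplit]
    ring
  set Φ : ℝ → ℝ := fun s => Real.exp s * (C - ∫ u in (0:ℝ)..s, h u) with hΦdef
  have hΦ : ∀ s : ℝ, 0 ≤ s → Φ s = sAV φ 𝒜 δ (φ.toFun s x) := by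
    intro s hs
    rw [sAV_flow hδ hg x hs, key s hs]
  have hΦ0 : Φ 0 = C := by
    simp [hΦdef, Real.exp_zero, intervalIntegral.integral_same]
  have hψ : HasDerivAt (fun s => ∫ u in (0:ℝ)..s, h u) (h 0) 0 :=
    intervalIntegral.integral_hasDerivAt_right (hcont.intervalIntegrable 0 0)
      (hcont.stronglyMeasurableAtFilter _ _) hcont.continuousAt
  have hΦ' : HasDerivAt Φ (C - h 0) 0 := by
    have h1 : HasDerivAt Real.exp (Real.exp 0) 0 := Real.hasDerivAt_exp 0
    have h2 : HasDerivAt (fun s => C - ∫ u in (0:ℝ)..s, h u) (0 - h 0) 0 :=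
      (hasDerivAt_const 0 C).sub hψ
    have := h1.mul h2
    simp only [Real.exp_zero, intervalIntegral.integral_same, one_mul, mul_one,
      sub_zero, zero_sub, mul_neg] at this ⊢
    convert this using 1 <;> rfl
  have h0 : h 0 = sAg φ 𝒜 δ x := by
    rw [hhdef, sAH, max_self, φ.map_zero, neg_zero, Real.exp_zero, one_mul]
  have hslope := hasDerivAt_iff_tendsto_slope.1 hΦ'
  have hmono : nhdsWithin (0:ℝ) (Set.Ioi 0) ≤ nhdsWithin (0:ℝ) {(0:ℝ)}ᶜ :=
    nhdsWithin_mono 0 (fun t ht => ne_of_gt ht)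
  have hT : Tendsto (slope Φ 0) (nhdsWithin (0:ℝ) (Set.Ioi 0)) (nhds (C - h 0)) :=
    hslope.mono_left hmono
  have heq : (fun t : ℝ => (sAV φ 𝒜 δ (φ.toFun t x) - sAV φ 𝒜 δ x) / t)
      =ᶠ[nhdsWithin (0:ℝ) (Set.Ioi 0)] slope Φ 0 := by
    filter_upwards [self_mem_nhdsWithin] with t ht
    have ht' : (0:ℝ) < t := ht
    rw [slope_def_field, hΦ0, hΦ t ht'.le, sub_zero, hCdef]
  have hT2 : Tendsto (fun t : ℝ => (sAV φ 𝒜 δ (φ.toFun t x) - sAV φ 𝒜 δ x) / t)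
      (nhdsWithin (0:ℝ) (Set.Ioi 0)) (nhds (C - h 0)) := hT.congr' heq.symm
  rw [Semiflow.dini, hT2.limsup_eq, h0, hCdef]


end Stmt12Aux

/-- For an attractor `𝒜` with basin `Ω` and `δ > 0` with
`K = cl B(𝒜,δ) ⊂⊂ Ω`, there is a continuous `V : X → ℝ` with `V = 0` on `𝒜`,
`0 < V ≤ 1` outside `K`, `V = 1` on `X \ Ω`, and `D⁺V(x) ≤ -v(x)` everywhere, where
`v` is continuous nonnegative, `0 < v ≤ 1` on `Ω \ K`, and `v = 0` off `Ω \ 𝒜`. -/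
theorem stmt12 {X : Type*} [MetricSpace X] [CompleteSpace X] (φ : Semiflow X)
    (hac : φ.AsympCompact) (𝒜 : Set X) (h𝒜 : φ.IsAttractor 𝒜)
    (δ : ℝ) (hδ : 0 < δ)
    (hK : WayInside (closure {y : X | Metric.infDist y 𝒜 < δ}) (φ.basin 𝒜)) :
    ∃ V v : X → ℝ, Continuous V ∧ Continuous v ∧
      (∀ x ∈ 𝒜, V x = 0) ∧
      (∀ x ∉ closure {y : X | Metric.infDist y 𝒜 < δ}, 0 < V x ∧ V x ≤ 1) ∧
      (∀ x ∉ φ.basin 𝒜, V x = 1) ∧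
      (∀ x : X, 0 ≤ v x) ∧
      (∀ x ∈ φ.basin 𝒜 \ closure {y : X | Metric.infDist y 𝒜 < δ}, 0 < v x ∧ v x ≤ 1) ∧
      (∀ x ∉ φ.basin 𝒜 \ 𝒜, v x = 0) ∧
      (∀ x : X, φ.dini V x ≤ -v x) := by
  obtain ⟨hcomp, hinv, U, hU1, hU2⟩ := h𝒜
  rcases Set.eq_empty_or_nonempty 𝒜 with h𝒜e | hne
  · -- empty attractor: everything is trivial
    subst h𝒜e
    have hbasin : ∀ y : X, y ∈ φ.basin (∅ : Set X) := by
      intro y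
      show Tendsto (fun t : ℝ => Metric.infDist (φ.toFun t y) (∅ : Set X)) atTop (nhds 0)
      simp only [Metric.infDist_empty]
      exact tendsto_const_nhds
    have hclos : ∀ y : X, y ∈ closure {z : X | Metric.infDist z (∅ : Set X) < δ} := by
      intro y
      apply subset_closure
      simp [Metric.infDist_empty, hδ]
    refine ⟨fun _ => 0, fun _ => 0, continuous_const, continuous_const, ?_, ?_, ?_, ?_, ?_, ?_, ?_⟩
    · intro x _; rfl
    · intro x hx; exact absurd (hclos x) hx
    · intro x hx; exact absurd (hbasin x) hx
    · intro x; exact le_refl 0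
    · rintro x ⟨_, hx2⟩; exact absurd (hclos x) hx2
    · intro x _; rfl
    · intro x
      have hd : φ.dini (fun _ => (0:ℝ)) x = 0 := by
        rw [Semiflow.dini]
        have heq : (fun t : ℝ => ((0:ℝ) - 0) / t) = fun _ => (0:ℝ) := by
          funext t; ring
        rw [heq, Filter.limsup_const]
      rw [hd]; norm_num
  · have hKb : closure {y : X | Metric.infDist y 𝒜 < δ} ⊆ φ.basin 𝒜 :=
      fun y hy => interior_subset (hK.1 (subset_closure hy))
    have hg : Continuous (sAg φ 𝒜 δ) := sAg_continuous hδ hne hcomp hU1 hU2 hKb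
    refine ⟨sAV φ 𝒜 δ, fun x => sAg φ 𝒜 δ x - sAV φ 𝒜 δ x, sAV_continuous hδ hg,
      hg.sub (sAV_continuous hδ hg), ?_, ?_, ?_, ?_, ?_, ?_, ?_⟩
    · -- V = 0 on 𝒜
      intro x hx
      refine sAV_of_const fun t ht => sAg_eq_zero hδ fun u hu => ?_
      rw [← φ.map_add u t hu ht]
      exact inv_forward hinv hx (add_nonneg hu ht)
    · -- 0 < V ≤ 1 outside K
      intro x hx
      exact ⟨sAV_pos hδ hg (sAg_eq_one hδ (notMem_closure_far hδ hx)),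
        sAV_le_one hδ hg x⟩
    · -- V = 1 outside the basin
      intro x hx
      refine sAV_of_const fun t ht => sAg_eq_one hδ ?_
      have hout : φ.toFun t x ∉ φ.basin 𝒜 := fun hmem => hx (basin_negInv ht hmem)
      exact notMem_closure_far hδ fun hc => hout (hKb hc)
    · -- v nonneg
      intro x
      show 0 ≤ sAg φ 𝒜 δ x - sAV φ 𝒜 δ x
      have := sAV_le_sAg hδ hg x
      linarith
    · -- 0 < v ≤ 1 on Ω \ K
      rintro x ⟨hx1, hx2⟩
      have hg1 : sAg φ 𝒜 δ x = 1 := sAg_eq_one hδ (notMem_closure_far hδ hx2)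
      have hlt := sAV_lt_one hδ hg hx1
      have hnn := sAV_nonneg (φ := φ) (𝒜 := 𝒜) (δ := δ) hδ x
      show 0 < sAg φ 𝒜 δ x - sAV φ 𝒜 δ x ∧ sAg φ 𝒜 δ x - sAV φ 𝒜 δ x ≤ 1
      constructor
      · rw [hg1]; linarith
      · have hle := sAg_le_one (φ := φ) (𝒜 := 𝒜) (δ := δ) x
        linarith
    · -- v = 0 off Ω \ 𝒜
      intro x hx
      rw [Set.mem_diff] at hx
      push_neg at hx
      show sAg φ 𝒜 δ x - sAV φ 𝒜 δ x = 0
      by_cases hb : x ∈ φ.basin 𝒜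
      · have hxA : x ∈ 𝒜 := hx hb
        have hgz : sAg φ 𝒜 δ x = 0 :=
          sAg_eq_zero hδ fun t ht => inv_forward hinv hxA ht
        have hVz : sAV φ 𝒜 δ x = 0 := by
          refine sAV_of_const fun t ht => sAg_eq_zero hδ fun u hu => ?_
          rw [← φ.map_add u t hu ht]
          exact inv_forward hinv hxA (add_nonneg hu ht)
        rw [hgz, hVz]; ring
      · have horb : ∀ t, 0 ≤ t → sAg φ 𝒜 δ (φ.toFun t x) = 1 := by
          intro t ht
          refine sAg_eq_one hδ (notMem_closure_far hδ fun hc => ?_)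
          exact (fun hmem => hb (basin_negInv ht hmem)) (hKb hc)
        have hVx : sAV φ 𝒜 δ x = 1 := sAV_of_const horb
        have hgx : sAg φ 𝒜 δ x = 1 := by
          have := horb 0 le_rfl
          rwa [φ.map_zero] at this
        rw [hgx, hVx]; ring
    · -- Dini derivative
      intro x
      show φ.dini (sAV φ 𝒜 δ) x ≤ -(sAg φ 𝒜 δ x - sAV φ 𝒜 δ x)
      rw [dini_sAV hδ hg x]
      linarith [le_refl (sAV φ 𝒜 δ x)]
end

section
/- (First Deformation Lemma) Let S be an asymptotically compact semiflow on a complete metric space X, 𝒜 an attractor with attraction basin Ω, ℳ = {M₁, …, M_l} a Morse decomposition of 𝒜, and V a strict Morse–Lyapunov function of ℳ on Ω with generalized critical values c_k = V(M_k). Let −∞ < a < b < +∞. If V has no generalized critical values in [a,b], then the level set V_a = {x ∈ Ω : V(x) ≤ a} is a strong deformation retract of V_b = {x ∈ Ω : V(x) ≤ b}. -/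
open Metric Set Filter Topology Bornology

section SF18
open Metric Set Filter Topology Bornology

variable {X : Type*} [MetricSpace X] (φ : Semiflow X)

/-- For fixed `t ≥ 0`, the time-`t` map is continuous. -/
lemma SF18.flow_cont {t : ℝ} (ht : 0 ≤ t) : Continuous (φ.toFun t) := by
  rw [← continuousOn_univ]
  exact φ.continuousOn.comp ((continuous_const.prodMk continuous_id).continuousOn)
    (fun y _ => ⟨ht, trivial⟩)

/-- The basin is positively invariant. -/
lemma SF18.basin_inv {𝒜 : Set X} {x : X} (hx : x ∈ φ.basin 𝒜) {s : ℝ} (hs : 0 ≤ s) :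
    φ.toFun s x ∈ φ.basin 𝒜 := by
  have hx' : Tendsto (fun t : ℝ => infDist (φ.toFun t x) 𝒜) atTop (𝓝 0) := hx
  have h1 : Tendsto (fun t : ℝ => infDist (φ.toFun (t + s) x) 𝒜) atTop (𝓝 0) :=
    hx'.comp (tendsto_atTop_add_const_right atTop s tendsto_id)
  have h2 : (fun t : ℝ => infDist (φ.toFun (t + s) x) 𝒜) =ᶠ[atTop]
      (fun t : ℝ => infDist (φ.toFun t (φ.toFun s x)) 𝒜) := by
    filter_upwards [eventually_ge_atTop (0:ℝ)] with t ht
    rw [φ.map_add t s ht hs]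
  exact h1.congr' h2

/-- Omega limit of a forward iterate is contained in that of the point. -/
lemma SF18.omega_sub {x : X} {t : ℝ} (ht : 0 ≤ t) :
    φ.omegaLimit {φ.toFun t x} ⊆ φ.omegaLimit {x} := by
  rintro y ⟨xs, ts, hxs, hts0, htsTop, hconv⟩
  refine ⟨fun _ => x, fun n => ts n + t, fun _ => rfl, fun n => add_nonneg (hts0 n) ht,
    tendsto_atTop_add_const_right atTop t htsTop, ?_⟩
  refine hconv.congr fun n => ?_
  rw [φ.map_add (ts n) t (hts0 n) ht, ← Set.mem_singleton_iff.mp (hxs n)]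

end SF18

/-- First Deformation Lemma: if a strict Morse–Lyapunov function `V` of a
Morse decomposition has no generalized critical values in `[a,b]`, then the sublevel set
`V_a` is a strong deformation retract of `V_b`. -/
theorem stmt18 {X : Type*} [MetricSpace X] [CompleteSpace X] (φ : Semiflow X)
    (hac : φ.AsympCompact) (𝒜 : Set X) (h𝒜 : φ.IsAttractor 𝒜)
    (l : ℕ) (hl : 1 ≤ l) (M : ℕ → Set X) (hMD : φ.IsMorseDecomposition 𝒜 l M)
    (V : X → ℝ) (hV : φ.IsStrictMorseLyapunov (φ.basin 𝒜) l M V)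
    (a b : ℝ) (hab : a < b)
    (hcrit : ∀ k, 1 ≤ k → k ≤ l → ∀ x ∈ M k, V x ∉ Set.Icc a b) :
    IsStrongDeformationRetract {x ∈ φ.basin 𝒜 | V x ≤ a} {x ∈ φ.basin 𝒜 | V x ≤ b} := by
  classical
  obtain ⟨hcomp, hinv, -⟩ := h𝒜
  obtain ⟨A, hA0, hAl, hAattr, hAsub, hMk⟩ := hMD
  obtain ⟨⟨hVcont, hVconst0, hVstrict⟩, c, hVconst, -⟩ := hV
  set Ω : Set X := φ.basin 𝒜 with hΩdef
  set E : Set X := {x ∈ Ω | V x ≤ b} with hEdef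
  set F : Set X := {x ∈ Ω | V x ≤ a} with hFdef
  -- 𝒜 is nonempty
  have h𝒜ne : 𝒜.Nonempty := by
    have h1 : A 0 ⊂ A 1 := hAsub 1 le_rfl hl
    rw [hA0, Set.empty_ssubset] at h1
    exact h1.mono (hAattr 1 le_rfl hl).1
  -- 𝒜 ⊆ Ω
  have h𝒜Ω : 𝒜 ⊆ Ω := by
    intro x hx
    have : ∀ t : ℝ, 0 ≤ t → φ.toFun t x ∈ 𝒜 := fun t ht => by
      rw [← hinv t ht]; exact Set.mem_image_of_mem _ hx
    have h2 : (fun t : ℝ => infDist (φ.toFun t x) 𝒜) =ᶠ[atTop] (fun _ => (0:ℝ)) := by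
      filter_upwards [eventually_ge_atTop (0:ℝ)] with t ht
      exact infDist_zero_of_mem (this t ht)
    exact Filter.Tendsto.congr' h2.symm tendsto_const_nhds
  -- Morse sets are forward invariant
  have hMinv : ∀ k, 1 ≤ k → k ≤ l → ∀ x ∈ M k, ∀ t, 0 ≤ t → φ.toFun t x ∈ M k := by
    intro k hk1 hkl x hx t ht
    rw [hMk k hk1 hkl] at hx ⊢
    obtain ⟨hxA, hx𝒜, hxω⟩ := hx
    have hAinv := (hAattr k hk1 hkl).2.2.1
    have hxA' : φ.toFun t x ∈ A k := by
      rw [← hAinv t ht]; exact Set.mem_image_of_mem _ hxA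
    refine ⟨hxA', (hAattr k hk1 hkl).1 hxA', ?_⟩
    exact Set.eq_empty_of_subset_empty (hxω ▸ Set.inter_subset_inter_left _ (SF18.omega_sub φ ht))
  -- V nonincreasing along orbits in Ω
  have hVle : ∀ x ∈ Ω, ∀ t, 0 ≤ t → V (φ.toFun t x) ≤ V x := by
    intro x hxΩ t ht
    by_cases hxM : x ∈ ⋃ k ∈ Set.Icc 1 l, M k
    · simp only [Set.mem_iUnion, exists_prop] at hxM
      obtain ⟨k, hk, hxk⟩ := hxM
      rw [hVconst k hk.1 hk.2 _ (hMinv k hk.1 hk.2 x hxk t ht),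
        hVconst k hk.1 hk.2 x hxk]
    · rcases eq_or_lt_of_le ht with h | h
      · rw [← h, φ.map_zero]
      · have := hVstrict x ⟨hxΩ, hxM⟩ Set.self_mem_Ici (le_of_lt h) h
        simpa [φ.map_zero] using this.le
  have hVmono : ∀ x ∈ Ω, ∀ s t : ℝ, 0 ≤ s → s ≤ t → V (φ.toFun t x) ≤ V (φ.toFun s x) := by
    intro x hxΩ s t hs hst
    have h1 : φ.toFun t x = φ.toFun (t - s) (φ.toFun s x) := by
      rw [← φ.map_add (t - s) s (by linarith) hs, sub_add_cancel]
    rw [h1]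
    exact hVle _ (SF18.basin_inv φ hxΩ hs) (t - s) (by linarith)
  -- joint continuity of (t,x) ↦ V (S t x) on Ici 0 ×ˢ Ω
  have hΩinv : ∀ x ∈ Ω, ∀ s : ℝ, 0 ≤ s → φ.toFun s x ∈ Ω := fun x hx s hs =>
    SF18.basin_inv φ hx hs
  have hG : ContinuousOn (fun p : ℝ × X => V (φ.toFun p.1 p.2)) (Set.Ici 0 ×ˢ Ω) := by
    refine hVcont.comp (φ.continuousOn.mono ?_) ?_
    · exact Set.prod_mono le_rfl (Set.subset_univ _)
    · rintro ⟨t, x⟩ ⟨ht, hx⟩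
      exact hΩinv x hx t ht
  -- continuity in x of x ↦ V (S t x) within Ω, at fixed time t ≥ 0
  have hevt : ∀ t : ℝ, 0 ≤ t → ∀ x ∈ Ω,
      Tendsto (fun x' => V (φ.toFun t x')) (𝓝[Ω] x) (𝓝 (V (φ.toFun t x))) := by
    intro t ht x hx
    have h1 := hG (t, x) ⟨ht, hx⟩
    have h2 : Tendsto (fun x' : X => ((t:ℝ), x')) (𝓝[Ω] x) (𝓝[Set.Ici 0 ×ˢ Ω] (t, x)) :=
      ((continuous_const.prodMk continuous_id).continuousWithinAt).tendsto_nhdsWithin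
        (fun y hy => ⟨ht, hy⟩)
    have h1' : Tendsto (fun p : ℝ × X => V (φ.toFun p.1 p.2))
        (𝓝[Set.Ici 0 ×ˢ Ω] (t, x)) (𝓝 (V (φ.toFun t x))) := h1
    exact h1'.comp h2
  -- continuity in t of t ↦ V (S t x) on Ici 0, for x ∈ Ω
  have hft : ∀ x ∈ Ω, ContinuousOn (fun t : ℝ => V (φ.toFun t x)) (Set.Ici 0) := by
    intro x hx
    exact hG.comp ((continuous_id.prodMk continuous_const).continuousOn)
      (fun t ht => ⟨ht, hx⟩)
  -- entry: the orbit of any x ∈ E eventually reaches V ≤ a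
  have hentry : ∀ x ∈ Ω, V x ≤ b → ∃ t : ℝ, 0 ≤ t ∧ V (φ.toFun t x) ≤ a := by
    intro x hxΩ hxb
    by_contra hcon
    push_neg at hcon
    -- the discrete orbit is bounded
    obtain ⟨N, hN⟩ : ∃ N : ℕ, ∀ n ≥ N, infDist (φ.toFun (n:ℝ) x) 𝒜 ≤ 1 := by
      have h1 : Tendsto (fun n : ℕ => infDist (φ.toFun (n:ℝ) x) 𝒜) atTop (𝓝 0) :=
        hxΩ.comp tendsto_natCast_atTop_atTop
      exact Filter.eventually_atTop.mp (h1.eventually_le_const (by norm_num : (0:ℝ) < 1))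
    have hbdd : IsBounded (Set.range fun n : ℕ => φ.toFun ((n:ℕ):ℝ) x) := by
      have hsub : (Set.range fun n : ℕ => φ.toFun ((n:ℕ):ℝ) x) ⊆
          ((fun n : ℕ => φ.toFun ((n:ℕ):ℝ) x) '' {n : ℕ | n < N}) ∪ Metric.thickening 2 𝒜 := by
        rintro _ ⟨n, rfl⟩
        rcases lt_or_ge n N with h | h
        · exact Or.inl ⟨n, h, rfl⟩
        · refine Or.inr (Metric.mem_thickening_iff.mpr ?_)
          exact (Metric.infDist_lt_iff h𝒜ne).mp (lt_of_le_of_lt (hN n h) one_lt_two)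
      exact (((Set.finite_lt_nat N).image _).isBounded.union (hcomp.isBounded.thickening)).subset hsub
    obtain ⟨y, k, hkmono, hky⟩ := hac (fun _ => x) (fun n => (n:ℝ))
      (fun n => Nat.cast_nonneg n)
      (Bornology.isBounded_singleton.subset Set.range_const_subset)
      tendsto_natCast_atTop_atTop hbdd
    -- y ∈ 𝒜
    have hy𝒜 : y ∈ 𝒜 := by
      have h1 : Tendsto (fun n => infDist (φ.toFun ((k n : ℕ):ℝ) x) 𝒜) atTop (𝓝 0) :=
        hxΩ.comp (tendsto_natCast_atTop_atTop.comp hkmono.tendsto_atTop)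
      have h2 : Tendsto (fun n => infDist (φ.toFun ((k n : ℕ):ℝ) x) 𝒜) atTop
          (𝓝 (infDist y 𝒜)) := ((continuous_infDist_pt 𝒜).tendsto y).comp hky
      have h3 : infDist y 𝒜 = 0 := tendsto_nhds_unique h2 h1
      have := (mem_closure_iff_infDist_zero h𝒜ne).mpr h3
      rwa [hcomp.isClosed.closure_eq] at this
    have hyΩ : y ∈ Ω := h𝒜Ω hy𝒜
    -- V (S (k n) x) → V y
    have horbΩ : ∀ n : ℕ, φ.toFun ((k n : ℕ):ℝ) x ∈ Ω :=
      fun n => hΩinv x hxΩ _ (Nat.cast_nonneg _)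
    have hVy : Tendsto (fun n => V (φ.toFun ((k n : ℕ):ℝ) x)) atTop (𝓝 (V y)) := by
      have h1 : Tendsto (fun n => φ.toFun ((k n : ℕ):ℝ) x) atTop (𝓝[Ω] y) :=
        tendsto_nhdsWithin_of_tendsto_nhds_of_eventually_within _ hky
          (Filter.Eventually.of_forall horbΩ)
      exact (hVcont y hyΩ).tendsto.comp h1
    -- squeeze: V (S (k n + 1) x) → V y as well
    have hsq : Tendsto (fun n => V (φ.toFun (((k n : ℕ):ℝ) + 1) x)) atTop (𝓝 (V y)) := by
      have hup : ∀ n, V (φ.toFun (((k n : ℕ):ℝ) + 1) x) ≤ V (φ.toFun ((k n : ℕ):ℝ) x) :=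
        fun n => hVmono x hxΩ _ _ (Nat.cast_nonneg _) (by linarith)
      have hlo : ∀ n, V (φ.toFun ((k (n+1) : ℕ):ℝ) x) ≤ V (φ.toFun (((k n : ℕ):ℝ) + 1) x) := by
        intro n
        refine hVmono x hxΩ _ _ (by positivity) ?_
        have : k n + 1 ≤ k (n + 1) := hkmono (Nat.lt_succ_self n)
        exact_mod_cast this
      exact tendsto_of_tendsto_of_tendsto_of_le_of_le
        (hVy.comp (tendsto_add_atTop_nat 1)) hVy hlo hup
    -- V (S 1 y) = V y
    have hS1 : Tendsto (fun n => V (φ.toFun (((k n : ℕ):ℝ) + 1) x)) atTop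
        (𝓝 (V (φ.toFun 1 y))) := by
      have h0 : ∀ n : ℕ, φ.toFun (((k n : ℕ):ℝ) + 1) x = φ.toFun 1 (φ.toFun ((k n : ℕ):ℝ) x) := by
        intro n
        rw [← φ.map_add 1 _ zero_le_one (Nat.cast_nonneg _), add_comm]
      have h1 : Tendsto (fun n => φ.toFun 1 (φ.toFun ((k n : ℕ):ℝ) x)) atTop
          (𝓝 (φ.toFun 1 y)) := ((SF18.flow_cont φ zero_le_one).tendsto y).comp hky
      have h2 : Tendsto (fun n => φ.toFun 1 (φ.toFun ((k n : ℕ):ℝ) x)) atTop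
          (𝓝[Ω] (φ.toFun 1 y)) :=
        tendsto_nhdsWithin_of_tendsto_nhds_of_eventually_within _ h1
          (Filter.Eventually.of_forall fun n => hΩinv _ (horbΩ n) 1 zero_le_one)
      have h3 := (hVcont _ (hΩinv y hyΩ 1 zero_le_one)).tendsto.comp h2
      refine h3.congr fun n => ?_
      simp only [Function.comp_apply]
      rw [h0 n]
    have heq : V (φ.toFun 1 y) = V y := tendsto_nhds_unique hS1 hsq
    -- y is in a Morse set
    have hya : a ≤ V y :=
      ge_of_tendsto hVy (Filter.Eventually.of_forall fun n =>
        (hcon _ (Nat.cast_nonneg (k n))).le)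
    have hyb : V y ≤ b :=
      le_of_tendsto hVy (Filter.Eventually.of_forall fun n =>
        le_trans (by simpa [φ.map_zero] using hVmono x hxΩ 0 _ le_rfl (Nat.cast_nonneg (k n))) hxb)
    by_cases hyM : y ∈ ⋃ k ∈ Set.Icc 1 l, M k
    · simp only [Set.mem_iUnion, exists_prop] at hyM
      obtain ⟨j, hj, hyj⟩ := hyM
      exact hcrit j hj.1 hj.2 y hyj ⟨hya, hyb⟩
    · have h5 : V (φ.toFun 1 y) < V (φ.toFun 0 y) :=
        hVstrict y ⟨hyΩ, hyM⟩ Set.self_mem_Ici (Set.mem_Ici.mpr zero_le_one) zero_lt_one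
      rw [φ.map_zero] at h5
      exact absurd heq (ne_of_lt h5)
  -- the entry-time function
  set T : X → ℝ := fun x => sInf {t : ℝ | 0 ≤ t ∧ V (φ.toFun t x) ≤ a} with hTdef
  have hSbdd : ∀ x : X, BddBelow {t : ℝ | 0 ≤ t ∧ V (φ.toFun t x) ≤ a} :=
    fun x => ⟨0, fun t ht => ht.1⟩
  have hSne : ∀ x ∈ E, {t : ℝ | 0 ≤ t ∧ V (φ.toFun t x) ≤ a}.Nonempty := by
    intro x hx
    obtain ⟨t, ht0, hta⟩ := hentry x hx.1 hx.2
    exact ⟨t, ht0, hta⟩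
  have hSclosed : ∀ x ∈ Ω, IsClosed {t : ℝ | 0 ≤ t ∧ V (φ.toFun t x) ≤ a} := by
    intro x hx
    have : {t : ℝ | 0 ≤ t ∧ V (φ.toFun t x) ≤ a}
        = Set.Ici 0 ∩ (fun t : ℝ => V (φ.toFun t x)) ⁻¹' Set.Iic a := rfl
    rw [this]
    exact (hft x hx).preimage_isClosed_of_isClosed isClosed_Ici isClosed_Iic
  have hTmem : ∀ x ∈ E, 0 ≤ T x ∧ V (φ.toFun (T x) x) ≤ a := by
    intro x hx
    exact (hSclosed x hx.1).csInf_mem (hSne x hx) (hSbdd x)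
  have hTnonneg : ∀ x ∈ E, 0 ≤ T x := fun x hx => (hTmem x hx).1
  have hT0 : ∀ x ∈ Ω, V x ≤ a → T x = 0 := by
    intro x hx hxa
    refine le_antisymm (csInf_le (hSbdd x) ⟨le_rfl, by rwa [φ.map_zero]⟩) ?_
    exact le_csInf ⟨0, le_rfl, by rwa [φ.map_zero]⟩ (fun t ht => ht.1)
  have hTlb : ∀ x ∈ E, ∀ t : ℝ, 0 ≤ t → t < T x → a < V (φ.toFun t x) := by
    intro x hx t ht0 htT
    by_contra hcon
    push_neg at hcon
    exact absurd (csInf_le (hSbdd x) ⟨ht0, hcon⟩) (not_le.mpr htT)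
  have hEΩ : E ⊆ Ω := fun x hx => hx.1
  -- continuity of T on E
  have hTcont : ContinuousOn T E := by
    intro x hx
    have hxΩ : x ∈ Ω := hx.1
    rw [ContinuousWithinAt, tendsto_order]
    constructor
    · intro cc hcc
      rcases lt_or_ge cc 0 with h0 | h0
      · filter_upwards [self_mem_nhdsWithin] with x' hx'
        exact lt_of_lt_of_le h0 (hTnonneg x' hx')
      · set c' := (cc + T x) / 2 with hc'
        have hc'0 : 0 ≤ c' := by simp only [hc']; linarith [hTnonneg x hx]
        have hcc' : cc < c' := by simp [hc']; linarith
        have hc'T : c' < T x := by simp [hc']; linarith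
        have ha' : a < V (φ.toFun c' x) := hTlb x hx c' hc'0 hc'T
        have hev1 : ∀ᶠ x' in 𝓝[Ω] x, a < V (φ.toFun c' x') :=
          (hevt c' hc'0 x hxΩ).eventually (eventually_gt_nhds ha')
        have hev2 : ∀ᶠ x' in 𝓝[E] x, a < V (φ.toFun c' x') :=
          hev1.filter_mono (nhdsWithin_mono x hEΩ)
        filter_upwards [hev2, self_mem_nhdsWithin] with x' h1 hx'
        refine lt_of_lt_of_le hcc' (le_csInf (hSne x' hx') ?_)
        intro t ht
        by_contra hcon
        push_neg at hcon
        exact absurd (le_trans (hVmono x' hx'.1 t c' ht.1 hcon.le) ht.2) (not_le.mpr h1)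
    · intro cc hcc
      obtain ⟨t', ht'0, ht'c, ht'a⟩ : ∃ t' : ℝ, 0 ≤ t' ∧ t' < cc ∧ V (φ.toFun t' x) < a := by
        rcases lt_or_eq_of_le (hTmem x hx).2 with h | h
        · exact ⟨T x, hTnonneg x hx, hcc, h⟩
        · set z := φ.toFun (T x) x with hz
          have hzΩ : z ∈ Ω := hΩinv x hxΩ _ (hTnonneg x hx)
          have hza : V z = a := h
          have hzM : z ∉ ⋃ k ∈ Set.Icc 1 l, M k := by
            intro hmem
            simp only [Set.mem_iUnion, exists_prop] at hmem
            obtain ⟨j, hj, hzj⟩ := hmem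
            exact hcrit j hj.1 hj.2 z hzj ⟨hza.ge, hza.le.trans hab.le⟩
          have hstrict := hVstrict z ⟨hzΩ, hzM⟩
          set s := min 1 ((cc - T x) / 2) with hs
          have hs0 : 0 < s := lt_min one_pos (by linarith)
          have h1 : V (φ.toFun s z) < V (φ.toFun 0 z) :=
            hstrict Set.self_mem_Ici hs0.le hs0
          rw [φ.map_zero, hza] at h1
          refine ⟨T x + s, by linarith [hTnonneg x hx], ?_, ?_⟩
          · have : s ≤ (cc - T x) / 2 := min_le_right _ _
            linarith
          · rw [add_comm, φ.map_add s (T x) hs0.le (hTnonneg x hx)]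
            exact h1
      have hev1 : ∀ᶠ x' in 𝓝[Ω] x, V (φ.toFun t' x') < a :=
        (hevt t' ht'0 x hxΩ).eventually_lt_const ht'a
      have hev2 : ∀ᶠ x' in 𝓝[E] x, V (φ.toFun t' x') < a :=
        hev1.filter_mono (nhdsWithin_mono x hEΩ)
      filter_upwards [hev2] with x' h1
      exact lt_of_le_of_lt (csInf_le (hSbdd x') ⟨ht'0, h1.le⟩) ht'c
  -- assemble the deformation
  refine ⟨fun x hx => ⟨hx.1, hx.2.trans hab.le⟩,
    fun p => φ.toFun (p.1 * T p.2) p.2, ?_, ?_, ?_, ?_, ?_⟩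
  · -- continuity of H
    have hg : ContinuousOn (fun p : ℝ × X => (p.1 * T p.2, p.2))
        (Set.Icc (0:ℝ) 1 ×ˢ E) := by
      refine ContinuousOn.prodMk ?_ continuousOn_snd
      exact (continuousOn_fst).mul (hTcont.comp continuousOn_snd (fun p hp => hp.2))
    refine (φ.continuousOn.comp hg ?_)
    rintro ⟨σ, x⟩ ⟨hσ, hx⟩
    exact ⟨mul_nonneg hσ.1 (hTnonneg x hx), trivial⟩
  · intro x hx
    simp [φ.map_zero]
  · intro x hx
    show φ.toFun (1 * T x) x ∈ F
    rw [one_mul]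
    exact ⟨hΩinv x hx.1 _ (hTnonneg x hx), (hTmem x hx).2⟩
  · intro σ hσ x hx
    show φ.toFun (σ * T x) x = x
    rw [hT0 x hx.1 hx.2, mul_zero, φ.map_zero]
  · intro σ hσ x hx
    have h1 : 0 ≤ σ * T x := mul_nonneg hσ.1 (hTnonneg x hx)
    show φ.toFun (σ * T x) x ∈ E
    refine ⟨hΩinv x hx.1 _ h1, ?_⟩
    calc V (φ.toFun (σ * T x) x) ≤ V (φ.toFun 0 x) := hVmono x hx.1 0 _ le_rfl h1
    _ = V x := by rw [φ.map_zero]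
    _ ≤ b := hx.2
end

section
/- (Second Deformation Lemma) Let S be an asymptotically compact semiflow on a complete metric space X, 𝒜 an attractor with attraction basin Ω, ℳ = {M₁, …, M_l} a Morse decomposition of 𝒜, and V a strict Morse–Lyapunov function of ℳ on Ω. Assume that for some 1 ≤ k₀ ≤ l the Morse set M_{k₀} consists of exactly one equilibrium E of the semiflow (S(t)E = E for all t ≥ 0). Let c = V(E), and let b > c be such that V has no generalized critical values in (c, b]. Then the level set V_c = {x ∈ Ω : V(x) ≤ c} is a strong deformation retract of V_b = {x ∈ Ω : V(x) ≤ b}. -/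
open Metric Set Filter Topology Bornology

/-! ### Auxiliary development for the Second Deformation Lemma -/

namespace SDL

open Metric Set Filter Topology Bornology

/-- All data and hypotheses of the Second Deformation Lemma, bundled. -/
structure Ctx (X : Type*) [MetricSpace X] where
  φ : Semiflow X
  hac : φ.AsympCompact
  𝒜 : Set X
  hcomp : IsCompact 𝒜
  hinv : φ.Invariant 𝒜
  U : Set X
  hU : 𝒜 ⊆ interior U
  hatt : φ.Attracts 𝒜 U
  l : ℕ
  hl : 1 ≤ l
  M : ℕ → Set X
  A : ℕ → Set X
  hattr : ∀ k, 1 ≤ k → k ≤ l → φ.IsAttractorIn 𝒜 (A k)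
  hMk : ∀ k, 1 ≤ k → k ≤ l → M k = A k ∩ φ.dualRepeller 𝒜 (A (k-1))
  V : X → ℝ
  hVcont : ContinuousOn V (φ.basin 𝒜)
  hdec : ∀ x ∈ φ.basin 𝒜 \ ⋃ k ∈ Set.Icc 1 l, M k,
    StrictAntiOn (fun t : ℝ => V (φ.toFun t x)) (Set.Ici (0:ℝ))
  cv : ℕ → ℝ
  hcv : ∀ k, 1 ≤ k → k ≤ l → ∀ x ∈ M k, V x = cv k
  hcvmono : ∀ j k, 1 ≤ j → j < k → k ≤ l → cv j < cv k
  k₀ : ℕ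
  hk₀1 : 1 ≤ k₀
  hk₀l : k₀ ≤ l
  E : X
  hME : M k₀ = {E}
  hEq : ∀ t ≥ (0:ℝ), φ.toFun t E = E
  c : ℝ
  b : ℝ
  hc : c = V E
  hb : c < b
  hcrit : ∀ k, 1 ≤ k → k ≤ l → ∀ x ∈ M k, V x ∉ Set.Ioc c b

namespace Ctx

variable {X : Type*} [MetricSpace X] (C : Ctx X)

/-- The flow map. -/
noncomputable def S (t : ℝ) (x : X) : X := C.φ.toFun t x

/-- The attraction basin. -/
def Om : Set X := C.φ.basin C.𝒜

/-- The union of the Morse sets. -/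
def R : Set X := ⋃ k ∈ Set.Icc 1 C.l, C.M k

lemma mem_Om {x : X} : x ∈ C.Om ↔
    Tendsto (fun t : ℝ => infDist (C.S t x) C.𝒜) atTop (𝓝 0) := Iff.rfl

lemma S_zero (x : X) : C.S 0 x = x := C.φ.map_zero x

lemma S_add {t s : ℝ} (ht : 0 ≤ t) (hs : 0 ≤ s) (x : X) :
    C.S (t + s) x = C.S t (C.S s x) := C.φ.map_add t s ht hs x

/-- Joint sequential/filter continuity of the flow. -/
lemma tendS {ι : Type*} {F : Filter ι} {t : ι → ℝ} {x : ι → X} {t₀ : ℝ} {x₀ : X}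
    (ht₀ : 0 ≤ t₀) (ht : Tendsto t F (𝓝 t₀)) (hx : Tendsto x F (𝓝 x₀))
    (hnn : ∀ᶠ n in F, 0 ≤ t n) :
    Tendsto (fun n => C.S (t n) (x n)) F (𝓝 (C.S t₀ x₀)) := by
  have h := C.φ.continuousOn (t₀, x₀) ⟨ht₀, mem_univ _⟩
  have h2 : Tendsto (fun n => ((t n : ℝ), x n)) F (𝓝[Set.Ici (0:ℝ) ×ˢ Set.univ] (t₀, x₀)) := by
    rw [tendsto_nhdsWithin_iff]
    exact ⟨ht.prodMk_nhds hx, hnn.mono fun n h => ⟨h, mem_univ _⟩⟩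
  exact h.tendsto.comp h2

lemma orbit_mem_Om {x : X} (hx : x ∈ C.Om) {s : ℝ} (hs : 0 ≤ s) : C.S s x ∈ C.Om := by
  rw [mem_Om]
  have h1 : Tendsto (fun t : ℝ => t + s) atTop atTop :=
    tendsto_atTop_add_const_right _ s tendsto_id
  have h2 := (C.mem_Om.1 hx).comp h1
  refine h2.congr' ?_
  filter_upwards [eventually_ge_atTop (0:ℝ)] with t ht
  simp only [Function.comp, S]
  rw [C.φ.map_add t s ht hs]

lemma A_sub_Om : C.𝒜 ⊆ C.Om := by
  intro x hx
  rw [mem_Om]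
  have key : ∀ t : ℝ, 0 ≤ t → infDist (C.S t x) C.𝒜 = 0 := by
    intro t ht
    have hmem : C.S t x ∈ C.𝒜 := by
      have h := C.hinv t ht
      rw [← h]; exact mem_image_of_mem _ hx
    exact infDist_zero_of_mem hmem
  have he : (fun t : ℝ => infDist (C.S t x) C.𝒜) =ᶠ[atTop] fun _ => (0:ℝ) := by
    filter_upwards [eventually_ge_atTop (0:ℝ)] with t ht using key t ht
  rw [tendsto_congr' he]; exact tendsto_const_nhds

lemma orbit_mem_A {x : X} (hx : x ∈ C.𝒜) {s : ℝ} (hs : 0 ≤ s) : C.S s x ∈ C.𝒜 := by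
  have h := C.hinv s hs
  rw [← h]; exact mem_image_of_mem _ hx

lemma mem_R_iff {x : X} : x ∈ C.R ↔ ∃ k, (1 ≤ k ∧ k ≤ C.l) ∧ x ∈ C.M k := by
  simp [R, Set.mem_Icc]

lemma M_sub_A {k : ℕ} (h1 : 1 ≤ k) (h2 : k ≤ C.l) : C.M k ⊆ C.𝒜 := by
  rw [C.hMk k h1 h2]
  intro x hx
  exact hx.2.1

lemma morse_inv {k : ℕ} (h1 : 1 ≤ k) (h2 : k ≤ C.l) {x : X} (hx : x ∈ C.M k)
    {t : ℝ} (ht : 0 ≤ t) : C.S t x ∈ C.M k := by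
  rw [C.hMk k h1 h2] at hx ⊢
  obtain ⟨hxA, hx𝒜, hω⟩ := hx
  refine ⟨?_, ?_, ?_⟩
  · have h := (C.hattr k h1 h2).2.2.1 t ht
    rw [← h]; exact mem_image_of_mem _ hxA
  · have h := C.hinv t ht
    rw [← h]; exact mem_image_of_mem _ hx𝒜
  · rw [Set.eq_empty_iff_forall_notMem]
    rintro y ⟨hy1, hy2⟩
    have hyx : y ∈ C.φ.omegaLimit {x} := by
      obtain ⟨z, ts, hz, hnn, hts, hlim⟩ := hy1
      refine ⟨fun _ => x, fun n => ts n + t, fun n => rfl, fun n => add_nonneg (hnn n) ht,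
        tendsto_atTop_add_const_right _ t hts, ?_⟩
      refine hlim.congr ?_
      intro n
      have hzn : z n = C.φ.toFun t x := by
        have := hz n; simpa [Ctx.S] using this
      rw [hzn, ← C.φ.map_add (ts n) t (hnn n) ht]
    rw [Set.eq_empty_iff_forall_notMem] at hω
    exact hω y ⟨hyx, hy2⟩

lemma V_orbit_R {x : X} (hx : x ∈ C.R) {t : ℝ} (ht : 0 ≤ t) : C.V (C.S t x) = C.V x := by
  obtain ⟨k, ⟨h1, h2⟩, hxk⟩ := C.mem_R_iff.1 hx
  rw [C.hcv k h1 h2 x hxk, C.hcv k h1 h2 _ (C.morse_inv h1 h2 hxk ht)]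

lemma strictV {x : X} (hx : x ∈ C.Om) (hR : x ∉ C.R) :
    StrictAntiOn (fun t : ℝ => C.V (C.S t x)) (Set.Ici (0:ℝ)) :=
  C.hdec x ⟨hx, hR⟩

lemma antitoneV {x : X} (hx : x ∈ C.Om) :
    AntitoneOn (fun t : ℝ => C.V (C.S t x)) (Set.Ici (0:ℝ)) := by
  by_cases hR : x ∈ C.R
  · intro s hs t ht _
    show C.V (C.S t x) ≤ C.V (C.S s x)
    rw [C.V_orbit_R hR hs, C.V_orbit_R hR ht]
  · exact (C.strictV hx hR).antitoneOn

lemma V_orbit_le {x : X} (hx : x ∈ C.Om) {t : ℝ} (ht : 0 ≤ t) : C.V (C.S t x) ≤ C.V x := by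
  have h := C.antitoneV hx (Set.self_mem_Ici) ht ht
  simpa only [C.S_zero] using h

lemma V_orbit_mono {x : X} (hx : x ∈ C.Om) {s t : ℝ} (hs : 0 ≤ s) (hst : s ≤ t) :
    C.V (C.S t x) ≤ C.V (C.S s x) :=
  C.antitoneV hx hs (le_trans hs hst) hst

lemma notR {x : X} (hcx : C.c < C.V x) (hbx : C.V x ≤ C.b) : x ∉ C.R := by
  intro hx
  obtain ⟨k, ⟨h1, h2⟩, hxk⟩ := C.mem_R_iff.1 hx
  exact C.hcrit k h1 h2 x hxk ⟨hcx, hbx⟩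

lemma E_mem_M : C.E ∈ C.M C.k₀ := by rw [C.hME]; rfl

lemma E_mem_A : C.E ∈ C.𝒜 := C.M_sub_A C.hk₀1 C.hk₀l C.E_mem_M

lemma E_mem_Om : C.E ∈ C.Om := C.A_sub_Om C.E_mem_A

lemma V_E : C.V C.E = C.c := C.hc.symm

lemma cv_k₀ : C.cv C.k₀ = C.c := by
  rw [← C.hcv C.k₀ C.hk₀1 C.hk₀l C.E C.E_mem_M, C.hc]

/-- A point of a Morse set at level `c` is the equilibrium. -/
lemma eqE {k : ℕ} (h1 : 1 ≤ k) (h2 : k ≤ C.l) {x : X} (hx : x ∈ C.M k)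
    (hVx : C.V x = C.c) : x = C.E := by
  have hk : k = C.k₀ := by
    by_contra hne
    rcases lt_or_gt_of_ne hne with h | h
    · have := C.hcvmono k C.k₀ h1 h C.hk₀l
      rw [C.cv_k₀, ← C.hcv k h1 h2 x hx, hVx] at this
      exact lt_irrefl _ this
    · have := C.hcvmono C.k₀ k C.hk₀1 h h2
      rw [C.cv_k₀, ← C.hcv k h1 h2 x hx, hVx] at this
      exact lt_irrefl _ this
  subst hk
  rw [C.hME] at hx
  exact hx

/-- A point of `R` at level `c` is the equilibrium. -/
lemma eqE' {x : X} (hx : x ∈ C.R) (hVx : C.V x = C.c) : x = C.E := by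
  obtain ⟨k, ⟨h1, h2⟩, hxk⟩ := C.mem_R_iff.1 hx
  exact C.eqE h1 h2 hxk hVx

/-- Continuity of `V` along convergent families inside the basin. -/
lemma tendV {ι : Type*} {F : Filter ι} {y : ι → X} {y₀ : X} (hy₀ : y₀ ∈ C.Om)
    (hyΩ : ∀ n, y n ∈ C.Om) (hy : Tendsto y F (𝓝 y₀)) :
    Tendsto (fun n => C.V (y n)) F (𝓝 (C.V y₀)) :=
  (C.hVcont y₀ hy₀).tendsto.comp (tendsto_nhdsWithin_iff.2 ⟨hy, Eventually.of_forall hyΩ⟩)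

lemma tendVS {x : ℕ → X} {x₀ : X} (hx₀ : x₀ ∈ C.Om) (hxΩ : ∀ n, x n ∈ C.Om)
    (hx : Tendsto x atTop (𝓝 x₀)) {t : ℝ} (ht : 0 ≤ t) :
    Tendsto (fun n => C.V (C.S t (x n))) atTop (𝓝 (C.V (C.S t x₀))) :=
  C.tendV (C.orbit_mem_Om hx₀ ht) (fun n => C.orbit_mem_Om (hxΩ n) ht)
    (C.tendS ht tendsto_const_nhds hx (Eventually.of_forall fun _ => ht))

/-! ### The hitting time of the sublevel set `{V ≤ c}` -/

/-- `x` reaches the sublevel set `{V ≤ c}` in finite time. -/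
def hits (x : X) : Prop := ∃ t : ℝ, 0 ≤ t ∧ C.V (C.S t x) ≤ C.c

/-- The set of hitting times. -/
def D (x : X) : Set ℝ := {t : ℝ | 0 ≤ t ∧ C.V (C.S t x) ≤ C.c}

/-- The first hitting time. -/
noncomputable def tau (x : X) : ℝ := sInf (C.D x)

lemma D_bddBelow (x : X) : BddBelow (C.D x) := ⟨0, fun _ ht => ht.1⟩

lemma contS (x : X) : ContinuousOn (fun t : ℝ => C.S t x) (Set.Ici (0:ℝ)) := by
  have h1 : ContinuousOn (fun t : ℝ => ((t : ℝ), x)) (Set.Ici (0:ℝ)) :=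
    (continuous_id.prodMk continuous_const).continuousOn
  exact C.φ.continuousOn.comp h1 (fun t ht => ⟨ht, mem_univ _⟩)

lemma contVS' {x : X} (hx : x ∈ C.Om) :
    ContinuousOn (fun t : ℝ => C.V (C.S t x)) (Set.Ici (0:ℝ)) :=
  C.hVcont.comp (C.contS x) (fun t ht => C.orbit_mem_Om hx ht)

lemma D_closed {x : X} (hx : x ∈ C.Om) : IsClosed (C.D x) := by
  have h := (C.contVS' hx).preimage_isClosed_of_isClosed isClosed_Ici
    (isClosed_Iic (a := C.c))
  have he : Set.Ici (0:ℝ) ∩ (fun t : ℝ => C.V (C.S t x)) ⁻¹' Set.Iic C.c = C.D x := by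
    ext t; simp [D, Set.mem_Iic]
  rwa [he] at h

lemma tau_mem {x : X} (hx : x ∈ C.Om) (hh : C.hits x) : C.tau x ∈ C.D x :=
  (C.D_closed hx).csInf_mem hh (C.D_bddBelow x)

lemma tau_nonneg {x : X} (hx : x ∈ C.Om) (hh : C.hits x) : 0 ≤ C.tau x :=
  (C.tau_mem hx hh).1

lemma tau_V_le {x : X} (hx : x ∈ C.Om) (hh : C.hits x) : C.V (C.S (C.tau x) x) ≤ C.c :=
  (C.tau_mem hx hh).2

lemma tau_le {x : X} {t : ℝ} (ht : 0 ≤ t) (hVt : C.V (C.S t x) ≤ C.c) : C.tau x ≤ t :=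
  csInf_le (C.D_bddBelow x) ⟨ht, hVt⟩

lemma V_pos_before_tau {x : X} {t : ℝ} (ht : 0 ≤ t) (htlt : t < C.tau x) :
    C.c < C.V (C.S t x) := by
  by_contra h
  push_neg at h
  exact absurd (C.tau_le ht h) (not_le.2 htlt)

lemma tau_zero_of_le {x : X} (hx : x ∈ C.Om) (hVx : C.V x ≤ C.c) : C.tau x = 0 := by
  have h0 : (0:ℝ) ∈ C.D x := ⟨le_refl _, by rwa [C.S_zero]⟩
  exact le_antisymm (csInf_le (C.D_bddBelow x) h0) (C.tau_nonneg hx ⟨0, h0⟩)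

lemma hits_of_le {x : X} (hVx : C.V x ≤ C.c) : C.hits x :=
  ⟨0, le_refl _, by rwa [C.S_zero]⟩

/-- At the first hitting time, `V` equals `c` (provided `V x ≥ c`). -/
lemma tau_V_eq {x : X} (hx : x ∈ C.Om) (hh : C.hits x) (hVx : C.c ≤ C.V x) :
    C.V (C.S (C.tau x) x) = C.c := by
  refine le_antisymm (C.tau_V_le hx hh) ?_
  rcases eq_or_lt_of_le (C.tau_nonneg hx hh) with h0 | hpos
  · rw [← h0, C.S_zero]; exact hVx
  · set τ := C.tau x
    have hco : ContinuousWithinAt (fun t : ℝ => C.V (C.S t x)) (Set.Ico 0 τ) τ := by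
      refine ((C.contVS' hx) τ (le_of_lt hpos)).mono ?_
      exact fun t ht => ht.1
    have hne : (𝓝[Set.Ico (0:ℝ) τ] τ).NeBot := by
      rw [← mem_closure_iff_nhdsWithin_neBot, closure_Ico (ne_of_lt hpos)]
      exact ⟨le_of_lt hpos, le_refl _⟩
    refine ge_of_tendsto hco ?_
    filter_upwards [self_mem_nhdsWithin] with t ht
    exact le_of_lt (C.V_pos_before_tau ht.1 ht.2)

/-- `V ≥ c` on the orbit up to the first hitting time. -/
lemma V_ge_before_tau {x : X} (hx : x ∈ C.Om) (hh : C.hits x) (hVx : C.c ≤ C.V x)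
    {u : ℝ} (hu : 0 ≤ u) (hu2 : u ≤ C.tau x) : C.c ≤ C.V (C.S u x) := by
  rcases eq_or_lt_of_le hu2 with h | h
  · rw [h]; exact le_of_eq (C.tau_V_eq hx hh hVx).symm
  · exact le_of_lt (C.V_pos_before_tau hu h)

/-! ### Uniform attraction and compactness along sequences with times tending to infinity -/

/-- Uniform attraction along sequences: if `x n → x₀ ∈ Ω` and `s n → ∞` then
`dist (S (s n) (x n), 𝒜) → 0`. -/
lemma attract_seq {x : ℕ → X} {x₀ : X} (hx₀ : x₀ ∈ C.Om) (hx : Tendsto x atTop (𝓝 x₀))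
    {s : ℕ → ℝ} (hs0 : ∀ n, 0 ≤ s n) (hs : Tendsto s atTop atTop) :
    Tendsto (fun n => infDist (C.S (s n) (x n)) C.𝒜) atTop (𝓝 0) := by
  have key : ∀ ε > (0:ℝ), ∀ᶠ n in atTop, infDist (C.S (s n) (x n)) C.𝒜 < ε := by
    intro ε hε
    obtain ⟨δ, hδ, hth⟩ := C.hcomp.exists_thickening_subset_open isOpen_interior C.hU
    have h1 : ∀ᶠ t : ℝ in atTop, infDist (C.S t x₀) C.𝒜 < δ := by
      have := C.mem_Om.1 hx₀
      exact (this.eventually_lt_const hδ).mono (fun t ht => by simpa using ht)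
    obtain ⟨T, hT0, hTd⟩ : ∃ T : ℝ, 0 ≤ T ∧ infDist (C.S T x₀) C.𝒜 < δ := by
      obtain ⟨T, hT⟩ := (h1.and (eventually_ge_atTop (0:ℝ))).exists
      exact ⟨T, hT.2, hT.1⟩
    have h2 : Tendsto (fun n => infDist (C.S T (x n)) C.𝒜) atTop
        (𝓝 (infDist (C.S T x₀) C.𝒜)) :=
      ((continuous_infDist_pt _).tendsto _).comp
        (C.tendS hT0 tendsto_const_nhds hx (Eventually.of_forall fun _ => hT0))
    have h3 : ∀ᶠ n in atTop, C.S T (x n) ∈ C.U := by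
      filter_upwards [h2.eventually_lt_const hTd] with n hn
      have : C.S T (x n) ∈ Metric.thickening δ C.𝒜 := by
        rw [Metric.mem_thickening_iff_infDist_lt ⟨C.E, C.E_mem_A⟩]
        exact hn
      exact interior_subset (hth this)
    obtain ⟨T₁, hT₁, hfar⟩ := C.hatt ε hε
    have h4 : ∀ᶠ n in atTop, T + T₁ < s n := hs.eventually (eventually_gt_atTop (T + T₁))
    filter_upwards [h3, h4] with n hn3 hn4
    have hsub : 0 ≤ s n - T := by linarith
    have heq : C.S (s n) (x n) = C.S (s n - T) (C.S T (x n)) := by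
      rw [← C.S_add hsub hT0]
      congr 1
      ring
    rw [heq]
    exact hfar (s n - T) (by linarith) _ hn3
  rw [Metric.tendsto_atTop]
  intro ε hε
  obtain ⟨N, hN⟩ := eventually_atTop.1 (key ε hε)
  refine ⟨N, fun n hn => ?_⟩
  rw [Real.dist_eq, sub_zero, abs_of_nonneg infDist_nonneg]
  exact hN n hn

lemma bounded_images {x : ℕ → X} {x₀ : X} (hx₀ : x₀ ∈ C.Om) (hx : Tendsto x atTop (𝓝 x₀))
    {s : ℕ → ℝ} (hs0 : ∀ n, 0 ≤ s n) (hs : Tendsto s atTop atTop) :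
    IsBounded (Set.range fun n => C.S (s n) (x n)) := by
  have h1 := C.attract_seq hx₀ hx hs0 hs
  obtain ⟨N, hN⟩ := eventually_atTop.1 (h1.eventually_lt_const one_pos)
  have hsub : (Set.range fun n => C.S (s n) (x n)) ⊆
      ((fun n => C.S (s n) (x n)) '' (Set.Iio N)) ∪ Metric.thickening 1 C.𝒜 := by
    rintro y ⟨n, rfl⟩
    rcases lt_or_ge n N with h | h
    · exact Or.inl ⟨n, h, rfl⟩
    · refine Or.inr ?_
      rw [Metric.mem_thickening_iff_infDist_lt ⟨C.E, C.E_mem_A⟩]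
      exact hN n h
  refine IsBounded.subset ?_ hsub
  exact (((Set.finite_Iio N).image _).isBounded).union (C.hcomp.isBounded.thickening)

/-- The closure of the image sequence is compact (via asymptotic compactness). -/
lemma compact_closure_images {x : ℕ → X} {x₀ : X} (hx₀ : x₀ ∈ C.Om)
    (hx : Tendsto x atTop (𝓝 x₀))
    {s : ℕ → ℝ} (hs0 : ∀ n, 0 ≤ s n) (hs : Tendsto s atTop atTop) :
    IsCompact (closure (Set.range fun n => C.S (s n) (x n))) := by
  apply IsSeqCompact.isCompact
  intro y hy
  set f : ℕ → X := fun n => C.S (s n) (x n) with hf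
  have hchoose : ∀ k : ℕ, ∃ m : ℕ, dist (y k) (f m) < 1/(k+1) := by
    intro k
    have hyk := hy k
    rw [Metric.mem_closure_iff] at hyk
    obtain ⟨z, ⟨m, rfl⟩, hz⟩ := hyk (1/(k+1)) (by positivity)
    exact ⟨m, hz⟩
  choose n hn using hchoose
  have hdist : ∀ (ψ : ℕ → ℕ), StrictMono ψ → ∀ {w : X},
      Tendsto (fun j => f (n (ψ j))) atTop (𝓝 w) → Tendsto (fun j => y (ψ j)) atTop (𝓝 w) := by
    intro ψ hψ w hw
    rw [Metric.tendsto_atTop] at hw ⊢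
    intro ε hε
    obtain ⟨N₁, hN₁⟩ := hw (ε/2) (by positivity)
    obtain ⟨N₂, hN₂⟩ := eventually_atTop.1
      (tendsto_one_div_add_atTop_nhds_zero_nat.eventually_lt_const (show (0:ℝ) < ε/2 by positivity))
    refine ⟨max N₁ N₂, fun j hj => ?_⟩
    have h1 := hN₁ j (le_trans (le_max_left _ _) hj)
    have h2 : dist (y (ψ j)) (f (n (ψ j))) < ε/2 := by
      calc dist (y (ψ j)) (f (n (ψ j))) < 1/(ψ j + 1) := hn (ψ j)
        _ ≤ 1/(j+1) := by
            apply one_div_le_one_div_of_le (by positivity)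
            have hj' : (j:ℝ) ≤ (ψ j : ℝ) := by exact_mod_cast hψ.le_apply
            linarith
        _ < ε/2 := hN₂ j (le_trans (le_max_right _ _) hj)
    calc dist (y (ψ j)) w ≤ dist (y (ψ j)) (f (n (ψ j))) + dist (f (n (ψ j))) w :=
          dist_triangle _ _ _
      _ < ε/2 + ε/2 := add_lt_add h2 h1
      _ = ε := by ring
  by_cases hdi : Tendsto (fun k => s (n k)) atTop atTop
  · obtain ⟨w, ψ, hψ, hw⟩ := C.hac (fun k => x (n k)) (fun k => s (n k)) (fun k => hs0 _)
      (IsBounded.subset hx.cauchySeq.isBounded_range (Set.range_comp_subset_range n x)) hdi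
      (IsBounded.subset (C.bounded_images hx₀ hx hs0 hs) (Set.range_comp_subset_range n f))
    refine ⟨w, ?_, ψ, hψ, ?_⟩
    · exact mem_closure_of_tendsto hw (Eventually.of_forall fun j => Set.mem_range_self _)
    · exact hdist ψ hψ hw
  · rw [Filter.tendsto_atTop] at hdi
    push_neg at hdi
    obtain ⟨B, hB⟩ := hdi
    have hB' : ∃ᶠ k in atTop, s (n k) ≤ B := hB.mono (fun k hk => hk.le)
    obtain ⟨ψ, hψ, hψB⟩ := Filter.extraction_of_frequently_atTop hB'
    have hKx : IsCompact (insert x₀ (Set.range x)) := hx.isCompact_insert_range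
    have hKp : IsCompact ((Set.Icc (0:ℝ) B) ×ˢ insert x₀ (Set.range x)) :=
      isCompact_Icc.prod hKx
    have hmem : ∀ j, (s (n (ψ j)), x (n (ψ j))) ∈
        (Set.Icc (0:ℝ) B) ×ˢ insert x₀ (Set.range x) :=
      fun j => ⟨⟨hs0 _, hψB j⟩, Or.inr ⟨_, rfl⟩⟩
    obtain ⟨p, hp, ψ₂, hψ₂, hconv⟩ := hKp.tendsto_subseq hmem
    have ht0 : 0 ≤ p.1 := hp.1.1
    have hconv1 : Tendsto (fun j => s (n (ψ (ψ₂ j)))) atTop (𝓝 p.1) :=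
      (continuous_fst.tendsto p).comp hconv
    have hconv2 : Tendsto (fun j => x (n (ψ (ψ₂ j)))) atTop (𝓝 p.2) :=
      (continuous_snd.tendsto p).comp hconv
    have hlim : Tendsto (fun j => f (n (ψ (ψ₂ j)))) atTop (𝓝 (C.S p.1 p.2)) :=
      C.tendS ht0 hconv1 hconv2 (Eventually.of_forall fun j => hs0 _)
    refine ⟨C.S p.1 p.2, ?_, ψ ∘ ψ₂, hψ.comp hψ₂, ?_⟩
    · exact mem_closure_of_tendsto hlim (Eventually.of_forall fun j => Set.mem_range_self _)
    · exact hdist (ψ ∘ ψ₂) (hψ.comp hψ₂) hlim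

/-! ### The key convergence lemma -/

/-- KEY LEMMA: if `x n → x₀` in the basin, `s n → ∞`, and the orbit of `x n` stays
at level `≥ c` up to time `s n`, then `S (s n) (x n) → E`. -/
lemma conv_to_E {x : ℕ → X} {x₀ : X} (hx₀ : x₀ ∈ C.Om) (hx : Tendsto x atTop (𝓝 x₀))
    (hxΩ : ∀ n, x n ∈ C.Om) (hxb : ∀ n, C.V (x n) ≤ C.b)
    {s : ℕ → ℝ} (hs0 : ∀ n, 0 ≤ s n) (hs : Tendsto s atTop atTop)
    (hge : ∀ n, ∀ u, 0 ≤ u → u ≤ s n → C.c ≤ C.V (C.S u (x n))) :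
    Tendsto (fun n => C.S (s n) (x n)) atTop (𝓝 C.E) := by
  rw [tendsto_iff_ultrafilter]
  intro 𝒰 h𝒰
  set g : ℕ → ℕ → X := fun m n => C.S (max (s n - m) 0) (x n) with hgdef
  have hg0 : ∀ m n, 0 ≤ max (s n - (m:ℝ)) 0 := fun _ _ => le_max_right _ _
  have hgt : ∀ m : ℕ, Tendsto (fun n => max (s n - (m:ℝ)) 0) atTop atTop := by
    intro m
    apply tendsto_atTop_mono (fun n => le_max_left (s n - (m:ℝ)) 0)
    have h1 : Tendsto (fun n => s n + (-(m:ℝ))) atTop atTop :=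
      tendsto_atTop_add_const_right _ (-(m:ℝ)) hs
    exact h1.congr (fun n => by ring)
  have hEv : ∀ m : ℕ, ∀ᶠ n in (𝒰 : Filter ℕ), (m:ℝ) ≤ s n :=
    fun m => (hs.eventually (eventually_ge_atTop (m:ℝ))).filter_mono h𝒰
  have hlim : ∀ m : ℕ, ∃ z : X, Tendsto (g m) (𝒰 : Filter ℕ) (𝓝 z) := by
    intro m
    have hK := C.compact_closure_images hx₀ hx (hg0 m) (hgt m)
    have hp : ↑(𝒰.map (g m)) ≤
        𝓟 (closure (Set.range fun n => C.S (max (s n - (m:ℝ)) 0) (x n))) := by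
      rw [Ultrafilter.coe_map, le_principal_iff, mem_map]
      apply Filter.univ_mem'
      intro n
      exact subset_closure (Set.mem_range_self n)
    obtain ⟨z, _, hle⟩ := hK.ultrafilter_le_nhds (𝒰.map (g m)) hp
    refine ⟨z, ?_⟩
    rwa [Ultrafilter.coe_map] at hle
  choose γ hγ using hlim
  have hγA : ∀ m, γ m ∈ C.𝒜 := by
    intro m
    have h1 : Tendsto (fun n => infDist (g m n) C.𝒜) (𝒰 : Filter ℕ) (𝓝 0) :=
      (C.attract_seq hx₀ hx (hg0 m) (hgt m)).mono_left h𝒰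
    have h2 : Tendsto (fun n => infDist (g m n) C.𝒜) (𝒰 : Filter ℕ)
        (𝓝 (infDist (γ m) C.𝒜)) :=
      ((continuous_infDist_pt _).tendsto _).comp (hγ m)
    exact (C.hcomp.isClosed.mem_iff_infDist_zero ⟨C.E, C.E_mem_A⟩).2
      (tendsto_nhds_unique h2 h1)
  have hγΩ : ∀ m, γ m ∈ C.Om := fun m => C.A_sub_Om (hγA m)
  have hgΩ : ∀ m n, g m n ∈ C.Om := fun m n => C.orbit_mem_Om (hxΩ n) (hg0 m n)
  have hVγt : ∀ m, Tendsto (fun n => C.V (g m n)) (𝒰 : Filter ℕ) (𝓝 (C.V (γ m))) :=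
    fun m => C.tendV (hγΩ m) (hgΩ m) (hγ m)
  have hVγc : ∀ m, C.c ≤ C.V (γ m) := by
    intro m
    refine ge_of_tendsto (hVγt m) ?_
    filter_upwards [hEv m] with n hn
    have h1 : 0 ≤ s n - (m:ℝ) := by linarith
    show C.c ≤ C.V (C.S (max (s n - (m:ℝ)) 0) (x n))
    rw [max_eq_left h1]
    exact hge n _ h1 (by linarith)
  have hVγb : ∀ m, C.V (γ m) ≤ C.b := by
    intro m
    refine le_of_tendsto (hVγt m) (Eventually.of_forall fun n => ?_)
    exact le_trans (C.V_orbit_le (hxΩ n) (hg0 m n)) (hxb n)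
  have hrel : ∀ m, C.S 1 (γ (m+1)) = γ m := by
    intro m
    have he : ∀ᶠ n in (𝒰 : Filter ℕ), C.S 1 (g (m+1) n) = g m n := by
      filter_upwards [hEv (m+1)] with n hn
      have hc1 : ((m+1:ℕ):ℝ) = (m:ℝ)+1 := by push_cast; ring
      have h1 : (0:ℝ) ≤ s n - ((m+1:ℕ):ℝ) := by rw [hc1]; rw [hc1] at hn; linarith
      have h2 : (0:ℝ) ≤ s n - (m:ℝ) := by rw [hc1] at hn; linarith
      show C.S 1 (C.S (max (s n - ((m+1:ℕ):ℝ)) 0) (x n)) = C.S (max (s n - (m:ℝ)) 0) (x n)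
      rw [max_eq_left h1, max_eq_left h2, ← C.S_add zero_le_one h1]
      congr 1
      rw [hc1]
      ring
    have t1 : Tendsto (fun n => C.S 1 (g (m+1) n)) (𝒰 : Filter ℕ) (𝓝 (C.S 1 (γ (m+1)))) :=
      C.tendS zero_le_one tendsto_const_nhds (hγ (m+1))
        (Eventually.of_forall fun _ => zero_le_one)
    exact tendsto_nhds_unique (t1.congr' he) (hγ m)
  have hmono : Monotone (fun m => C.V (γ m)) := by
    apply monotone_nat_of_le_succ
    intro m
    rw [← hrel m]
    exact C.V_orbit_le (hγΩ (m+1)) zero_le_one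
  have hbdd : BddAbove (Set.range fun m => C.V (γ m)) := by
    refine ⟨C.b, ?_⟩
    rintro _ ⟨m, rfl⟩
    exact hVγb m
  set v : ℝ := ⨆ m, C.V (γ m) with hvdef
  have hv : Tendsto (fun m => C.V (γ m)) atTop (𝓝 v) := tendsto_atTop_ciSup hmono hbdd
  obtain ⟨z, hzA, ψ, hψ, hzt⟩ := C.hcomp.tendsto_subseq hγA
  have hVz : C.V z = v :=
    tendsto_nhds_unique (C.tendV (C.A_sub_Om hzA) (fun j => hγΩ (ψ j)) hzt)
      (hv.comp hψ.tendsto_atTop)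
  have hS1z : Tendsto (fun j => C.S 1 (γ (ψ j))) atTop (𝓝 (C.S 1 z)) :=
    C.tendS zero_le_one tendsto_const_nhds hzt (Eventually.of_forall fun _ => zero_le_one)
  have he2 : ∀ᶠ j in atTop, C.S 1 (γ (ψ j)) = γ (ψ j - 1) := by
    filter_upwards [eventually_ge_atTop 1] with j hj
    have h1 : 1 ≤ ψ j := le_trans hj hψ.le_apply
    have h2 := hrel (ψ j - 1)
    rwa [Nat.sub_add_cancel h1] at h2
  have hlz : Tendsto (fun j => γ (ψ j - 1)) atTop (𝓝 (C.S 1 z)) := hS1z.congr' he2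
  have hVS1z : C.V (C.S 1 z) = v := by
    have ha : Tendsto (fun j => C.V (γ (ψ j - 1))) atTop (𝓝 (C.V (C.S 1 z))) :=
      C.tendV (C.A_sub_Om (C.orbit_mem_A hzA zero_le_one)) (fun j => hγΩ _) hlz
    have hb2 : Tendsto (fun j => C.V (γ (ψ j - 1))) atTop (𝓝 v) :=
      hv.comp ((tendsto_sub_atTop_nat 1).comp hψ.tendsto_atTop)
    exact tendsto_nhds_unique ha hb2
  have hzR : z ∈ C.R := by
    by_contra hzR
    have hstrict := C.strictV (C.A_sub_Om hzA) hzR self_mem_Ici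
      (mem_Ici.2 zero_le_one) zero_lt_one
    simp only [C.S_zero] at hstrict
    rw [hVS1z, hVz] at hstrict
    exact lt_irrefl _ hstrict
  have hveq : v = C.c := by
    obtain ⟨k, ⟨h1, h2⟩, hzk⟩ := C.mem_R_iff.1 hzR
    have h3 := C.hcrit k h1 h2 z hzk
    have hcle : C.c ≤ v := le_trans (hVγc 0) (le_ciSup hbdd 0)
    have hble : v ≤ C.b := ciSup_le hVγb
    by_contra hne
    exact h3 (by rw [hVz]; exact ⟨lt_of_le_of_ne hcle (Ne.symm hne), hble⟩)
  have hall : ∀ m, C.V (γ m) = C.c := by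
    intro m
    refine le_antisymm ?_ (hVγc m)
    rw [← hveq]
    exact le_ciSup hbdd m
  have h10 : C.S 1 (γ 1) = γ 0 := by
    have h := hrel 0
    norm_num at h
    exact h
  have hγ1 : γ 1 = C.E := by
    have hγ1R : γ 1 ∈ C.R := by
      by_contra hR1
      have hstrict := C.strictV (hγΩ 1) hR1 self_mem_Ici (mem_Ici.2 zero_le_one) zero_lt_one
      simp only [C.S_zero] at hstrict
      rw [h10, hall 0, hall 1] at hstrict
      exact lt_irrefl _ hstrict
    exact C.eqE' hγ1R (hall 1)
  have hγ0 : γ 0 = C.E := by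
    rw [← h10, hγ1]
    exact C.hEq 1 zero_le_one
  have hfin : ∀ᶠ n in (𝒰 : Filter ℕ), g 0 n = C.S (s n) (x n) := by
    apply Eventually.of_forall
    intro n
    show C.S (max (s n - ((0:ℕ):ℝ)) 0) (x n) = C.S (s n) (x n)
    norm_num [max_eq_left (hs0 n)]
  have hfin2 := (hγ 0).congr' hfin
  rwa [hγ0] at hfin2

/-! ### Semicontinuity of the hitting time -/

/-- If the first hitting point is not `E`, the hitting time is upper semicontinuous. -/
lemma usc {x₀ : X} (hx₀ : x₀ ∈ C.Om) (hh : C.hits x₀) (hne : C.S (C.tau x₀) x₀ ≠ C.E)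
    {x : ℕ → X} (hx : Tendsto x atTop (𝓝 x₀)) (hxΩ : ∀ n, x n ∈ C.Om)
    {δ : ℝ} (hδ : 0 < δ) :
    ∀ᶠ n in atTop, C.hits (x n) ∧ C.tau (x n) ≤ C.tau x₀ + δ := by
  set τ₀ := C.tau x₀ with hτ₀
  have hτ0 : 0 ≤ τ₀ := C.tau_nonneg hx₀ hh
  obtain ⟨t', ht'0, ht'le, ht'lt⟩ :
      ∃ t' : ℝ, 0 ≤ t' ∧ t' ≤ τ₀ + δ ∧ C.V (C.S t' x₀) < C.c := by
    rcases lt_or_eq_of_le (C.tau_V_le hx₀ hh) with h | h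
    · exact ⟨τ₀, hτ0, by linarith, h⟩
    · set y₀ := C.S τ₀ x₀ with hy₀
      have hy₀Ω : y₀ ∈ C.Om := C.orbit_mem_Om hx₀ hτ0
      have hy₀R : y₀ ∉ C.R := by
        intro hmem
        exact hne (C.eqE' hmem h)
      have hstrict := C.strictV hy₀Ω hy₀R self_mem_Ici (mem_Ici.2 (le_of_lt hδ)) hδ
      simp only [C.S_zero] at hstrict
      refine ⟨τ₀ + δ, by linarith, le_refl _, ?_⟩
      have heq : C.S (τ₀ + δ) x₀ = C.S δ y₀ := by
        rw [hy₀, ← C.S_add (le_of_lt hδ) hτ0, add_comm]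
      rw [heq]
      rw [h] at hstrict
      exact hstrict
  have hcont : Tendsto (fun n => C.V (C.S t' (x n))) atTop (𝓝 (C.V (C.S t' x₀))) :=
    C.tendVS hx₀ hxΩ hx ht'0
  filter_upwards [hcont.eventually_lt_const ht'lt] with n hn
  have hhit : C.hits (x n) := ⟨t', ht'0, le_of_lt hn⟩
  exact ⟨hhit, le_trans (C.tau_le ht'0 (le_of_lt hn)) ht'le⟩

/-- Lower bound on hitting times of nearby points. -/
lemma lsc {x₀ : X} (hx₀ : x₀ ∈ C.Om) {T : ℝ} (hT : 0 ≤ T) (hgt : C.c < C.V (C.S T x₀))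
    {x : ℕ → X} (hx : Tendsto x atTop (𝓝 x₀)) (hxΩ : ∀ n, x n ∈ C.Om) :
    ∀ᶠ n in atTop, (∀ u, 0 ≤ u → u ≤ T → C.c < C.V (C.S u (x n))) ∧
      (C.hits (x n) → T < C.tau (x n)) := by
  have hcont : Tendsto (fun n => C.V (C.S T (x n))) atTop (𝓝 (C.V (C.S T x₀))) :=
    C.tendVS hx₀ hxΩ hx hT
  filter_upwards [hcont.eventually_const_lt hgt] with n hn
  have h1 : ∀ u, 0 ≤ u → u ≤ T → C.c < C.V (C.S u (x n)) := by
    intro u hu huT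
    exact lt_of_lt_of_le hn (C.V_orbit_mono (hxΩ n) hu huT)
  refine ⟨h1, fun hhit => ?_⟩
  by_contra hle
  push_neg at hle
  have h2 := h1 _ (C.tau_nonneg (hxΩ n) hhit) hle
  exact absurd (C.tau_V_le (hxΩ n) hhit) (not_le.2 h2)

/-- If `c < V x₀ ≤ b` and `x₀` hits level `c`, the hitting point is not `E`. -/
lemma hit_ne_E {x₀ : X} (hx₀ : x₀ ∈ C.Om) (hh : C.hits x₀) (hcx : C.c < C.V x₀)
    (hbx : C.V x₀ ≤ C.b) : C.S (C.tau x₀) x₀ ≠ C.E := by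
  intro hEeq
  have hτ0 : 0 ≤ C.tau x₀ := C.tau_nonneg hx₀ hh
  have hxR : x₀ ∉ C.R := C.notR hcx hbx
  have hstrict := C.strictV hx₀ hxR (mem_Ici.2 hτ0)
    (mem_Ici.2 (by linarith : (0:ℝ) ≤ C.tau x₀ + 1)) (by linarith)
  have heq : C.S (C.tau x₀ + 1) x₀ = C.E := by
    rw [add_comm, C.S_add zero_le_one hτ0, hEeq]
    exact C.hEq 1 zero_le_one
  simp only [heq, hEeq] at hstrict
  exact lt_irrefl _ hstrict

/-! ### The deformation map -/

open Classical in
/-- The time spent flowing, as a function of the deformation parameter `σ` and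
the point `x`. -/
noncomputable def tuse (σ : ℝ) (x : X) : ℝ :=
  if σ < 1 then (if C.hits x then min (σ/(1-σ)) (C.tau x) else σ/(1-σ)) else C.tau x

open Classical in
/-- The deformation. -/
noncomputable def Hmap : ℝ × X → X :=
  fun p => if p.1 < 1 ∨ C.hits p.2 then C.S (C.tuse p.1 p.2) p.2 else C.E

lemma ratio_nonneg {σ : ℝ} (h0 : 0 ≤ σ) (h1 : σ < 1) : 0 ≤ σ/(1-σ) :=
  div_nonneg h0 (by linarith)

lemma tuse_nonneg {σ : ℝ} {x : X} (hx : x ∈ C.Om) (h0 : 0 ≤ σ) (h1 : σ ≤ 1) :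
    0 ≤ C.tuse σ x := by
  unfold tuse
  by_cases hσ : σ < 1
  · rw [if_pos hσ]
    by_cases hh : C.hits x
    · rw [if_pos hh]
      exact le_min (ratio_nonneg h0 hσ) (C.tau_nonneg hx hh)
    · rw [if_neg hh]
      exact ratio_nonneg h0 hσ
  · rw [if_neg hσ]
    by_cases hh : C.hits x
    · exact C.tau_nonneg hx hh
    · have hD : C.D x = ∅ := by
        rw [Set.eq_empty_iff_forall_notMem]
        intro t ht
        exact hh ⟨t, ht.1, ht.2⟩
      rw [tau, hD]
      simp [Real.sInf_empty]

lemma tuse_le_tau {σ : ℝ} {x : X} (hx : x ∈ C.Om) (hh : C.hits x) :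
    C.tuse σ x ≤ C.tau x := by
  unfold tuse
  by_cases hσ : σ < 1
  · rw [if_pos hσ, if_pos hh]
    exact min_le_right _ _
  · rw [if_neg hσ]

lemma tuse_of_le_c {σ : ℝ} {x : X} (hx : x ∈ C.Om) (hVx : C.V x ≤ C.c)
    (h0 : 0 ≤ σ) (h1 : σ ≤ 1) : C.tuse σ x = 0 := by
  have hh := C.hits_of_le hVx
  have hτ : C.tau x = 0 := C.tau_zero_of_le hx hVx
  unfold tuse
  by_cases hσ : σ < 1
  · rw [if_pos hσ, if_pos hh, hτ]
    exact le_antisymm (min_le_right _ _) (le_min (ratio_nonneg h0 hσ) (le_refl _))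
  · rw [if_neg hσ]
    exact hτ

/-- `H` is the identity on the sublevel set `{V ≤ c}`. -/
lemma Hmap_of_le_c {σ : ℝ} {x : X} (hx : x ∈ C.Om) (hVx : C.V x ≤ C.c)
    (h0 : 0 ≤ σ) (h1 : σ ≤ 1) : C.Hmap (σ, x) = x := by
  unfold Hmap
  have hh := C.hits_of_le hVx
  rw [if_pos (Or.inr hh)]
  show C.S (C.tuse σ x) x = x
  rw [C.tuse_of_le_c hx hVx h0 h1, C.S_zero]

lemma Hmap_zero {x : X} (hx : x ∈ C.Om) : C.Hmap (0, x) = x := by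
  unfold Hmap
  rw [if_pos (Or.inl one_pos)]
  show C.S (C.tuse 0 x) x = x
  have h : C.tuse 0 x = 0 := by
    unfold tuse
    rw [if_pos one_pos]
    split_ifs with hh
    · rw [zero_div]
      exact le_antisymm (min_le_left _ _) (le_min (le_refl _) (C.tau_nonneg hx hh))
    · exact zero_div _
  rw [h, C.S_zero]

/-- The deformation stays in the basin and in the sublevel set `{V ≤ b}`. -/
lemma Hmap_mem {σ : ℝ} {x : X} (hx : x ∈ C.Om) (hVb : C.V x ≤ C.b)
    (h0 : 0 ≤ σ) (h1 : σ ≤ 1) :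
    C.Hmap (σ, x) ∈ C.Om ∧ C.V (C.Hmap (σ, x)) ≤ C.b := by
  unfold Hmap
  split_ifs with hcond
  · have ht := C.tuse_nonneg hx h0 h1
    exact ⟨C.orbit_mem_Om hx ht, le_trans (C.V_orbit_le hx ht) hVb⟩
  · exact ⟨C.E_mem_Om, by rw [C.V_E]; exact le_of_lt C.hb⟩

/-- At `σ = 1` the deformation lands in `{V ≤ c}`. -/
lemma Hmap_one {x : X} (hx : x ∈ C.Om) :
    C.Hmap (1, x) ∈ C.Om ∧ C.V (C.Hmap (1, x)) ≤ C.c := by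
  unfold Hmap
  have h1 : ¬ ((1:ℝ) < 1) := lt_irrefl _
  by_cases hh : C.hits x
  · rw [if_pos (Or.inr hh)]
    show C.S (C.tuse 1 x) x ∈ C.Om ∧ C.V (C.S (C.tuse 1 x) x) ≤ C.c
    have ht : C.tuse 1 x = C.tau x := by unfold tuse; rw [if_neg h1]
    rw [ht]
    exact ⟨C.orbit_mem_Om hx (C.tau_nonneg hx hh), C.tau_V_le hx hh⟩
  · rw [if_neg (by push_neg; exact ⟨le_refl _, hh⟩)]
    exact ⟨C.E_mem_Om, le_of_eq C.V_E⟩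

/-! ### Small helpers for the continuity proof -/

lemma seq_split (P : ℕ → Prop) :
    ∃ ψ : ℕ → ℕ, StrictMono ψ ∧ ((∀ n, P (ψ n)) ∨ (∀ n, ¬ P (ψ n))) := by
  rcases Classical.em (∃ᶠ n in atTop, P n) with h | h
  · obtain ⟨ψ, h1, h2⟩ := Filter.extraction_of_frequently_atTop h
    exact ⟨ψ, h1, Or.inl h2⟩
  · rw [Filter.not_frequently] at h
    obtain ⟨N, hN⟩ := eventually_atTop.1 h
    exact ⟨fun n => n + N, fun a b hab => Nat.add_lt_add_right hab N,
      Or.inr fun n => hN _ (Nat.le_add_left N n)⟩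

lemma ratio_mono {a s : ℝ} (ha : 0 ≤ a) (has : a ≤ s) (hs : s < 1) : a/(1-a) ≤ s/(1-s) := by
  rw [div_le_div_iff₀ (by linarith) (by linarith)]
  nlinarith

lemma ratio_gt {B σ : ℝ} (hB : 0 ≤ B) (hσ : B/(B+1) < σ) (h1 : σ < 1) : B < σ/(1-σ) := by
  rw [lt_div_iff₀ (by linarith)]
  have h2 : B/(B+1) * (B+1) < σ * (B+1) := by
    apply mul_lt_mul_of_pos_right hσ
    linarith
  rw [div_mul_cancel₀] at h2
  · nlinarith
  · linarith

lemma not_hits_V_pos {x : X} (hh : ¬ C.hits x) {t : ℝ} (ht : 0 ≤ t) :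
    C.c < C.V (C.S t x) := by
  by_contra h
  push_neg at h
  exact hh ⟨t, ht, h⟩

lemma Hmap_eq_S {σ : ℝ} {x : X} (h : σ < 1 ∨ C.hits x) :
    C.Hmap (σ, x) = C.S (C.tuse σ x) x := by
  unfold Hmap
  rw [if_pos h]

lemma Hmap_eq_E {σ : ℝ} {x : X} (h1 : ¬ σ < 1) (h2 : ¬ C.hits x) : C.Hmap (σ, x) = C.E := by
  unfold Hmap
  rw [if_neg (by push_neg; exact ⟨not_lt.1 h1, h2⟩)]

lemma tuse_lt1_hits {σ : ℝ} {x : X} (hσ : σ < 1) (hh : C.hits x) :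
    C.tuse σ x = min (σ/(1-σ)) (C.tau x) := by
  unfold tuse
  rw [if_pos hσ, if_pos hh]

lemma tuse_lt1_nohits {σ : ℝ} {x : X} (hσ : σ < 1) (hh : ¬ C.hits x) :
    C.tuse σ x = σ/(1-σ) := by
  unfold tuse
  rw [if_pos hσ, if_neg hh]

lemma tuse_one {σ : ℝ} {x : X} (hσ : ¬ σ < 1) : C.tuse σ x = C.tau x := by
  unfold tuse
  rw [if_neg hσ]

lemma tuse_le_ratio {σ : ℝ} {x : X} (hσ : σ < 1) : C.tuse σ x ≤ σ/(1-σ) := by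
  unfold tuse
  rw [if_pos hσ]
  split_ifs with hh
  exacts [min_le_left _ _, le_refl _]

lemma E_tau : C.tau C.E = 0 := C.tau_zero_of_le C.E_mem_Om (le_of_eq C.V_E)

/-- Continuity of `tuse` when `σ₀ < 1` and `x₀ ≠ E`. -/
lemma tuse_tendsto {σ₀ : ℝ} {x₀ : X} (hσ0 : 0 ≤ σ₀) (hσ1 : σ₀ < 1) (hx₀ : x₀ ∈ C.Om)
    (hne : x₀ ≠ C.E) (hb₀ : C.V x₀ ≤ C.b)
    {σ : ℕ → ℝ} {x : ℕ → X} (h0 : ∀ n, 0 ≤ σ n) (hxΩ : ∀ n, x n ∈ C.Om)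
    (hσt : Tendsto σ atTop (𝓝 σ₀)) (hxt : Tendsto x atTop (𝓝 x₀)) :
    Tendsto (fun n => C.tuse (σ n) (x n)) atTop (𝓝 (C.tuse σ₀ x₀)) := by
  have hr : Tendsto (fun n => σ n / (1 - σ n)) atTop (𝓝 (σ₀/(1-σ₀))) :=
    hσt.div (tendsto_const_nhds.sub hσt) (by intro h; rw [sub_eq_zero] at h; linarith [h.symm])
  have hev1 : ∀ᶠ n in atTop, σ n < 1 := hσt.eventually_lt_const hσ1
  by_cases hh : C.hits x₀
  · -- the hitting point of x₀ is not E
    set τ₀ := C.tau x₀ with hτ₀def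
    have hτ0 : 0 ≤ τ₀ := C.tau_nonneg hx₀ hh
    have hyne : C.S τ₀ x₀ ≠ C.E := by
      rcases le_or_gt (C.V x₀) C.c with hvle | hvgt
      · rw [hτ₀def, C.tau_zero_of_le hx₀ hvle, C.S_zero]
        exact hne
      · exact C.hit_ne_E hx₀ hh hvgt hb₀
    have htuse : C.tuse σ₀ x₀ = min (σ₀/(1-σ₀)) τ₀ := C.tuse_lt1_hits hσ1 hh
    rw [htuse, Metric.tendsto_atTop]
    intro ε hε
    have husc := C.usc hx₀ hh hyne hxt hxΩ (half_pos hε)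
    have hlsc : ∀ᶠ n in atTop, C.hits (x n) → τ₀ - ε/2 < C.tau (x n) := by
      rcases lt_or_ge τ₀ (ε/2) with hcase | hcase
      · refine Eventually.of_forall fun n hhn => ?_
        have := C.tau_nonneg (hxΩ n) hhn
        linarith
      · have hT0 : 0 ≤ τ₀ - ε/2 := by linarith
        have hTlt : τ₀ - ε/2 < τ₀ := by linarith
        have hVpos := C.V_pos_before_tau hT0 hTlt
        exact (C.lsc hx₀ hT0 hVpos hxt hxΩ).mono fun n hn => hn.2
    have hrconv := Metric.tendsto_atTop.1 hr (ε/2) (half_pos hε)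
    obtain ⟨N₁, hN₁⟩ := hrconv
    obtain ⟨N₂, hN₂⟩ := eventually_atTop.1 (husc.and (hlsc.and hev1))
    refine ⟨max N₁ N₂, fun n hn => ?_⟩
    obtain ⟨⟨hhn, hτle⟩, hτgt, hσlt⟩ := hN₂ n (le_trans (le_max_right _ _) hn)
    have hr2 := hN₁ n (le_trans (le_max_left _ _) hn)
    rw [C.tuse_lt1_hits hσlt hhn]
    rw [Real.dist_eq] at hr2 ⊢
    have h1 : |C.tau (x n) - τ₀| ≤ ε/2 := by
      rw [abs_le]
      constructor
      · linarith [hτgt hhn]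
      · linarith
    calc |min (σ n/(1-σ n)) (C.tau (x n)) - min (σ₀/(1-σ₀)) τ₀|
        ≤ max |σ n/(1-σ n) - σ₀/(1-σ₀)| |C.tau (x n) - τ₀| := abs_min_sub_min_le_max _ _ _ _
      _ < ε := max_lt (by linarith) (by linarith)
  · -- `x₀` does not hit: eventually `tuse = ratio`
    have htuse : C.tuse σ₀ x₀ = σ₀/(1-σ₀) := C.tuse_lt1_nohits hσ1 hh
    rw [htuse]
    have hB : ∀ᶠ n in atTop, σ n/(1-σ n) < σ₀/(1-σ₀) + 1 :=
      hr.eventually_lt_const (by linarith)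
    have hτbig : ∀ᶠ n in atTop, C.hits (x n) → σ₀/(1-σ₀) + 1 < C.tau (x n) := by
      have hr0 : 0 ≤ σ₀/(1-σ₀) := ratio_nonneg hσ0 hσ1
      have hT0 : (0:ℝ) ≤ σ₀/(1-σ₀) + 1 := by linarith
      have hVpos := C.not_hits_V_pos hh hT0
      exact (C.lsc hx₀ hT0 hVpos hxt hxΩ).mono fun n hn => hn.2
    have heq : ∀ᶠ n in atTop, C.tuse (σ n) (x n) = σ n/(1-σ n) := by
      filter_upwards [hev1, hB, hτbig] with n h1 h2 h3
      by_cases hhn : C.hits (x n)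
      · rw [C.tuse_lt1_hits h1 hhn]
        exact min_eq_left (by linarith [h3 hhn])
      · exact C.tuse_lt1_nohits h1 hhn
    have heq' : (fun n => σ n/(1-σ n)) =ᶠ[atTop] (fun n => C.tuse (σ n) (x n)) :=
      heq.mono fun n h => h.symm
    exact hr.congr' heq'

/-! ### Sequential continuity of the deformation map -/

/-- Subsequence convergence of the deformation, assuming `c < V (x n)` for all `n`. -/
lemma Hmap_subconv_aux {σ₀ : ℝ} {x₀ : X} (hσ₀ : σ₀ ∈ Set.Icc (0:ℝ) 1)
    (hx₀ : x₀ ∈ C.Om) (hb₀ : C.V x₀ ≤ C.b)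
    {σ : ℕ → ℝ} {x : ℕ → X} (hσm : ∀ n, σ n ∈ Set.Icc (0:ℝ) 1)
    (hxΩ : ∀ n, x n ∈ C.Om) (hxb : ∀ n, C.V (x n) ≤ C.b)
    (hσt : Tendsto σ atTop (𝓝 σ₀)) (hxt : Tendsto x atTop (𝓝 x₀))
    (hcx : ∀ n, C.c < C.V (x n)) :
    ∃ ψ : ℕ → ℕ, StrictMono ψ ∧
      Tendsto (fun j => C.Hmap (σ (ψ j), x (ψ j))) atTop (𝓝 (C.Hmap (σ₀, x₀))) := by
  have hcx₀ : C.c ≤ C.V x₀ :=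
    ge_of_tendsto (C.tendV hx₀ hxΩ hxt) (Eventually.of_forall fun n => le_of_lt (hcx n))
  obtain ⟨ψ₁, hψ₁, hQ | hQ⟩ := seq_split (fun n => σ n = 1 ∧ ¬ C.hits (x n))
  · -- constant-E subsequence
    have hVge : ∀ t : ℝ, 0 ≤ t → C.c ≤ C.V (C.S t x₀) := by
      intro t ht
      refine ge_of_tendsto ((C.tendVS hx₀ hxΩ hxt ht).comp hψ₁.tendsto_atTop) ?_
      exact Eventually.of_forall fun j => le_of_lt (C.not_hits_V_pos (hQ j).2 ht)
    have hσ1 : σ₀ = 1 := by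
      have h1 : Tendsto (fun j => σ (ψ₁ j)) atTop (𝓝 σ₀) := hσt.comp hψ₁.tendsto_atTop
      have h2 : Tendsto (fun j => σ (ψ₁ j)) atTop (𝓝 1) :=
        tendsto_const_nhds.congr fun j => ((hQ j).1).symm
      exact tendsto_nhds_unique h1 h2
    have hσnl : ¬ σ₀ < 1 := by rw [hσ1]; exact lt_irrefl _
    have hHp : C.Hmap (σ₀, x₀) = C.E := by
      by_cases hh : C.hits x₀
      · set τ₀ := C.tau x₀ with hτ₀def
        have hτ0 : 0 ≤ τ₀ := C.tau_nonneg hx₀ hh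
        have hy₀Ω : C.S τ₀ x₀ ∈ C.Om := C.orbit_mem_Om hx₀ hτ0
        have hVy₀ : C.V (C.S τ₀ x₀) = C.c := le_antisymm (C.tau_V_le hx₀ hh) (hVge τ₀ hτ0)
        have hVu : ∀ u : ℝ, 0 ≤ u → C.V (C.S u (C.S τ₀ x₀)) = C.c := by
          intro u hu
          have heq : C.S u (C.S τ₀ x₀) = C.S (u + τ₀) x₀ := (C.S_add hu hτ0 x₀).symm
          rw [heq]
          refine le_antisymm ?_ (hVge _ (by linarith))
          calc C.V (C.S (u + τ₀) x₀) ≤ C.V (C.S τ₀ x₀) := C.V_orbit_mono hx₀ hτ0 (by linarith)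
            _ = C.c := hVy₀
        have hy₀R : C.S τ₀ x₀ ∈ C.R := by
          by_contra hR
          have hstrict := C.strictV hy₀Ω hR self_mem_Ici (mem_Ici.2 zero_le_one) zero_lt_one
          simp only [C.S_zero] at hstrict
          rw [hVu 1 zero_le_one, hVy₀] at hstrict
          exact lt_irrefl _ hstrict
        rw [C.Hmap_eq_S (Or.inr hh), C.tuse_one hσnl]
        exact C.eqE' hy₀R hVy₀
      · exact C.Hmap_eq_E hσnl hh
    refine ⟨ψ₁, hψ₁, ?_⟩
    rw [hHp]
    refine tendsto_const_nhds.congr fun j => ?_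
    exact (C.Hmap_eq_E (by rw [(hQ j).1]; exact lt_irrefl _) (hQ j).2).symm
  · -- main branch
    set σ' : ℕ → ℝ := fun j => σ (ψ₁ j) with hσ'def
    set x' : ℕ → X := fun j => x (ψ₁ j) with hx'def
    have hσ'm : ∀ j, σ' j ∈ Set.Icc (0:ℝ) 1 := fun j => hσm _
    have hx'Ω : ∀ j, x' j ∈ C.Om := fun j => hxΩ _
    have hx'b : ∀ j, C.V (x' j) ≤ C.b := fun j => hxb _
    have hσ't : Tendsto σ' atTop (𝓝 σ₀) := hσt.comp hψ₁.tendsto_atTop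
    have hx't : Tendsto x' atTop (𝓝 x₀) := hxt.comp hψ₁.tendsto_atTop
    have hcx' : ∀ j, C.c < C.V (x' j) := fun j => hcx _
    have hbr : ∀ j, σ' j < 1 ∨ C.hits (x' j) := by
      intro j
      by_cases hhj : C.hits (x' j)
      · exact Or.inr hhj
      · left
        rcases lt_or_eq_of_le (hσ'm j).2 with h | h
        · exact h
        · exact absurd ⟨h, hhj⟩ (hQ j)
    set T : ℕ → ℝ := fun j => C.tuse (σ' j) (x' j) with hTdef
    have hT0 : ∀ j, 0 ≤ T j := fun j => C.tuse_nonneg (hx'Ω j) (hσ'm j).1 (hσ'm j).2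
    have hTge : ∀ j, ∀ u, 0 ≤ u → u ≤ T j → C.c ≤ C.V (C.S u (x' j)) := by
      intro j u hu hule
      by_cases hhj : C.hits (x' j)
      · exact C.V_ge_before_tau (hx'Ω j) hhj (le_of_lt (hcx' j)) hu
          (le_trans hule (C.tuse_le_tau (hx'Ω j) hhj))
      · exact le_of_lt (C.not_hits_V_pos hhj hu)
    have hHS : ∀ j, C.Hmap (σ' j, x' j) = C.S (T j) (x' j) := fun j => C.Hmap_eq_S (hbr j)
    rcases Classical.em (Tendsto T atTop atTop) with hTat | hTat
    · -- times → ∞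
      have hlim : Tendsto (fun j => C.S (T j) (x' j)) atTop (𝓝 C.E) :=
        C.conv_to_E hx₀ hx't hx'Ω hx'b hT0 hTat hTge
      have hσnl : ¬ σ₀ < 1 := by
        intro hσlt
        set s' : ℝ := (1 + σ₀)/2 with hs'def
        have hs'lt : s' < 1 := by rw [hs'def]; linarith
        have hσs' : σ₀ < s' := by rw [hs'def]; linarith
        have hev : ∀ᶠ j in atTop, T j ≤ s'/(1-s') := by
          filter_upwards [hσ't.eventually_le_const hσs'] with j hj
          have hjl : σ' j < 1 := lt_of_le_of_lt hj hs'lt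
          calc T j ≤ σ' j/(1-σ' j) := C.tuse_le_ratio hjl
            _ ≤ s'/(1-s') := ratio_mono (hσ'm j).1 hj hs'lt
        have hgt := hTat.eventually (eventually_gt_atTop (s'/(1-s')))
        obtain ⟨j, hj1, hj2⟩ := (hev.and hgt).exists
        linarith
      have hHp : C.Hmap (σ₀, x₀) = C.E := by
        by_cases hh : C.hits x₀
        · have hyE : C.S (C.tau x₀) x₀ = C.E := by
            by_contra hyne
            have husc := C.usc hx₀ hh hyne hx't hx'Ω one_pos
            have hgt := hTat.eventually (eventually_gt_atTop (C.tau x₀ + 1))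
            obtain ⟨j, ⟨hhj, hτj⟩, hj2⟩ := (husc.and hgt).exists
            have h5 : T j ≤ C.tau x₀ + 1 := le_trans (C.tuse_le_tau (σ := σ' j) (hx'Ω j) hhj) hτj
            linarith
          rw [C.Hmap_eq_S (Or.inr hh), C.tuse_one hσnl]
          exact hyE
        · exact C.Hmap_eq_E hσnl hh
      refine ⟨ψ₁, hψ₁, ?_⟩
      rw [hHp]
      exact hlim.congr fun j => (hHS j).symm
    · -- bounded times along a sub-subsequence
      rw [Filter.tendsto_atTop] at hTat
      push_neg at hTat
      obtain ⟨B, hB⟩ := hTat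
      have hB' : ∃ᶠ j in atTop, T j ≤ B := hB.mono fun j hj => hj.le
      obtain ⟨ψ₂, hψ₂, hψ₂B⟩ := Filter.extraction_of_frequently_atTop hB'
      have hB0 : 0 ≤ B := le_trans (hT0 (ψ₂ 0)) (hψ₂B 0)
      have hmem : ∀ i, T (ψ₂ i) ∈ Set.Icc (0:ℝ) B := fun i => ⟨hT0 _, hψ₂B i⟩
      obtain ⟨m, hm, ψ₃, hψ₃, hTconv⟩ := isCompact_Icc.tendsto_subseq hmem
      set ψ' : ℕ → ℕ := ψ₂ ∘ ψ₃ with hψ'def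
      have hψ'm : StrictMono ψ' := hψ₂.comp hψ₃
      have hm0 : 0 ≤ m := hm.1
      have hTconv' : Tendsto (fun i => T (ψ' i)) atTop (𝓝 m) := hTconv
      have hw : Tendsto (fun i => C.S (T (ψ' i)) (x' (ψ' i))) atTop (𝓝 (C.S m x₀)) :=
        C.tendS hm0 hTconv' (hx't.comp hψ'm.tendsto_atTop)
          (Eventually.of_forall fun i => hT0 _)
      have hkey : C.S m x₀ = C.Hmap (σ₀, x₀) := by
        rcases lt_or_ge σ₀ 1 with hσlt | hσge
        · by_cases hxE : x₀ = C.E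
          · subst hxE
            rw [C.Hmap_eq_S (Or.inl hσlt)]
            have h1 : C.S m C.E = C.E := C.hEq m hm0
            have h2 : C.tuse σ₀ C.E = 0 :=
              C.tuse_of_le_c C.E_mem_Om (le_of_eq C.V_E) hσ₀.1 hσ₀.2
            rw [h1, h2, C.S_zero]
          · have htt := C.tuse_tendsto hσ₀.1 hσlt hx₀ hxE hb₀
              (fun j => (hσ'm j).1) hx'Ω hσ't hx't
            have htt2 : Tendsto (fun i => T (ψ' i)) atTop (𝓝 (C.tuse σ₀ x₀)) :=
              htt.comp hψ'm.tendsto_atTop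
            have hmeq : m = C.tuse σ₀ x₀ := tendsto_nhds_unique hTconv' htt2
            rw [C.Hmap_eq_S (Or.inl hσlt), hmeq]
        · -- σ₀ = 1
          have hσnl : ¬ σ₀ < 1 := not_lt.2 hσge
          have hevτ : ∀ᶠ i in atTop, C.hits (x' (ψ' i)) ∧ T (ψ' i) = C.tau (x' (ψ' i)) := by
            have hσ1' : Tendsto (fun i => σ' (ψ' i)) atTop (𝓝 σ₀) :=
              hσ't.comp hψ'm.tendsto_atTop
            have hai : ∀ᶠ i in atTop, B/(B+1) < σ' (ψ' i) := by
              apply hσ1'.eventually_const_lt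
              have h6 : B/(B+1) < 1 := by
                rw [div_lt_one (by linarith)]
                linarith
              linarith
            filter_upwards [hai] with i hi
            by_cases hσlt' : σ' (ψ' i) < 1
            · have hrB : B < σ' (ψ' i)/(1-σ' (ψ' i)) := ratio_gt hB0 hi hσlt'
              have hTB : T (ψ' i) ≤ B := hψ₂B (ψ₃ i)
              by_cases hhit : C.hits (x' (ψ' i))
              · refine ⟨hhit, ?_⟩
                have h3 : T (ψ' i) = min (σ' (ψ' i)/(1-σ' (ψ' i))) (C.tau (x' (ψ' i))) :=
                  C.tuse_lt1_hits hσlt' hhit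
                rcases min_cases (σ' (ψ' i)/(1-σ' (ψ' i))) (C.tau (x' (ψ' i))) with
                  ⟨h4, h5⟩ | ⟨h4, h5⟩
                · exfalso
                  rw [h3, h4] at hTB
                  linarith
                · rw [h3, h4]
              · exfalso
                have h2 : T (ψ' i) = σ' (ψ' i)/(1-σ' (ψ' i)) := C.tuse_lt1_nohits hσlt' hhit
                rw [h2] at hTB
                linarith
            · have hhit : C.hits (x' (ψ' i)) := (hbr (ψ' i)).resolve_left hσlt'
              exact ⟨hhit, C.tuse_one hσlt'⟩
          have hVc : C.V (C.S m x₀) = C.c := by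
            have h1 : Tendsto (fun i => C.V (C.S (T (ψ' i)) (x' (ψ' i)))) atTop
                (𝓝 (C.V (C.S m x₀))) :=
              C.tendV (C.orbit_mem_Om hx₀ hm0)
                (fun i => C.orbit_mem_Om (hx'Ω _) (hT0 _)) hw
            have h2 : ∀ᶠ i in atTop, C.V (C.S (T (ψ' i)) (x' (ψ' i))) = C.c := by
              filter_upwards [hevτ] with i hi
              rw [hi.2]
              exact C.tau_V_eq (hx'Ω _) hi.1 (le_of_lt (hcx' _))
            have h3 : Tendsto (fun i => C.V (C.S (T (ψ' i)) (x' (ψ' i)))) atTop (𝓝 C.c) := by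
              rw [tendsto_congr' h2]
              exact tendsto_const_nhds
            exact tendsto_nhds_unique h1 h3
          have hh₀ : C.hits x₀ := ⟨m, hm0, le_of_eq hVc⟩
          have hτm : C.tau x₀ ≤ m := C.tau_le hm0 (le_of_eq hVc)
          rw [C.Hmap_eq_S (Or.inr hh₀), C.tuse_one hσnl]
          rcases eq_or_lt_of_le hτm with heq | hlt
          · rw [← heq]
          · set τ₀ := C.tau x₀ with hτ₀def
            have hτ0 : 0 ≤ τ₀ := C.tau_nonneg hx₀ hh₀
            have hVτ : C.V (C.S τ₀ x₀) = C.c := C.tau_V_eq hx₀ hh₀ hcx₀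
            have huc : ∀ u : ℝ, 0 ≤ u → u ≤ m - τ₀ → C.V (C.S u (C.S τ₀ x₀)) = C.c := by
              intro u hu0 hum
              have heq2 : C.S u (C.S τ₀ x₀) = C.S (u + τ₀) x₀ := (C.S_add hu0 hτ0 x₀).symm
              rw [heq2]
              refine le_antisymm ?_ ?_
              · rw [← hVτ]
                exact C.V_orbit_mono hx₀ hτ0 (by linarith)
              · rw [← hVc]
                exact C.V_orbit_mono hx₀ (by linarith) (by linarith)
            have hy₀Ω : C.S τ₀ x₀ ∈ C.Om := C.orbit_mem_Om hx₀ hτ0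
            have hy₀R : C.S τ₀ x₀ ∈ C.R := by
              by_contra hR
              have hstrict := C.strictV hy₀Ω hR self_mem_Ici
                (mem_Ici.2 (by linarith : (0:ℝ) ≤ m - τ₀)) (by linarith)
              simp only [C.S_zero] at hstrict
              rw [huc (m - τ₀) (by linarith) (le_refl _), hVτ] at hstrict
              exact lt_irrefl _ hstrict
            have hy₀E : C.S τ₀ x₀ = C.E := C.eqE' hy₀R hVτ
            have hmE : C.S m x₀ = C.E := by
              have heq3 : C.S m x₀ = C.S (m - τ₀) (C.S τ₀ x₀) := by
                rw [← C.S_add (by linarith : (0:ℝ) ≤ m - τ₀) hτ0]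
                congr 1
                ring
              rw [heq3, hy₀E]
              exact C.hEq (m - τ₀) (by linarith)
            rw [hmE, hy₀E]
      refine ⟨ψ₁ ∘ ψ', hψ₁.comp hψ'm, ?_⟩
      rw [← hkey]
      exact hw.congr fun i => (hHS (ψ' i)).symm

/-- Subsequence convergence of the deformation map. -/
lemma Hmap_subconv {σ₀ : ℝ} {x₀ : X} (hσ₀ : σ₀ ∈ Set.Icc (0:ℝ) 1)
    (hx₀ : x₀ ∈ C.Om) (hb₀ : C.V x₀ ≤ C.b)
    {σ : ℕ → ℝ} {x : ℕ → X} (hσm : ∀ n, σ n ∈ Set.Icc (0:ℝ) 1)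
    (hxΩ : ∀ n, x n ∈ C.Om) (hxb : ∀ n, C.V (x n) ≤ C.b)
    (hσt : Tendsto σ atTop (𝓝 σ₀)) (hxt : Tendsto x atTop (𝓝 x₀)) :
    ∃ ψ : ℕ → ℕ, StrictMono ψ ∧
      Tendsto (fun j => C.Hmap (σ (ψ j), x (ψ j))) atTop (𝓝 (C.Hmap (σ₀, x₀))) := by
  obtain ⟨ψ₁, hψ₁, hP | hP⟩ := seq_split (fun n => C.V (x n) ≤ C.c)
  · have hVx₀ : C.V x₀ ≤ C.c :=
      le_of_tendsto ((C.tendV hx₀ hxΩ hxt).comp hψ₁.tendsto_atTop)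
        (Eventually.of_forall hP)
    have hHp : C.Hmap (σ₀, x₀) = x₀ := C.Hmap_of_le_c hx₀ hVx₀ hσ₀.1 hσ₀.2
    refine ⟨ψ₁, hψ₁, ?_⟩
    rw [hHp]
    refine (hxt.comp hψ₁.tendsto_atTop).congr fun j => ?_
    exact (C.Hmap_of_le_c (hxΩ _) (hP j) (hσm _).1 (hσm _).2).symm
  · obtain ⟨ψ₂, hψ₂, hconv⟩ := C.Hmap_subconv_aux hσ₀ hx₀ hb₀
      (σ := fun j => σ (ψ₁ j)) (x := fun j => x (ψ₁ j))
      (fun j => hσm _) (fun j => hxΩ _) (fun j => hxb _)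
      (hσt.comp hψ₁.tendsto_atTop) (hxt.comp hψ₁.tendsto_atTop)
      (fun j => not_le.1 (hP j))
    exact ⟨ψ₁ ∘ ψ₂, hψ₁.comp hψ₂, hconv⟩

/-- Continuity of the deformation map on `[0,1] × {x ∈ Ω | V x ≤ b}`. -/
lemma Hcont : ContinuousOn C.Hmap (Set.Icc (0:ℝ) 1 ×ˢ {x ∈ C.Om | C.V x ≤ C.b}) := by
  intro p hp
  obtain ⟨hσ₀, hx₀m⟩ := hp
  rw [ContinuousWithinAt, tendsto_iff_seq_tendsto]
  intro u hu
  rw [tendsto_nhdsWithin_iff] at hu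
  obtain ⟨hu1, hu2⟩ := hu
  obtain ⟨N, hN⟩ := eventually_atTop.1 hu2
  rw [← tendsto_add_atTop_iff_nat N]
  by_contra hcon
  rw [Metric.tendsto_atTop] at hcon
  push_neg at hcon
  obtain ⟨ε, hε, hfreq⟩ := hcon
  have hfr : ∃ᶠ n in atTop, ε ≤ dist ((C.Hmap ∘ u) (n + N)) (C.Hmap p) := by
    rw [frequently_atTop]
    intro a
    obtain ⟨n, hn1, hn2⟩ := hfreq a
    exact ⟨n, hn1, hn2⟩
  obtain ⟨ψ₀, hψ₀, hψ₀d⟩ := Filter.extraction_of_frequently_atTop hfr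
  have hmem : ∀ j, u (ψ₀ j + N) ∈ Set.Icc (0:ℝ) 1 ×ˢ {x ∈ C.Om | C.V x ≤ C.b} :=
    fun j => hN _ (Nat.le_add_left N _)
  have hshift : Tendsto (fun j => ψ₀ j + N) atTop atTop :=
    tendsto_atTop_mono (fun j => le_trans hψ₀.le_apply (Nat.le_add_right _ _)) tendsto_id
  have huu : Tendsto (fun j => u (ψ₀ j + N)) atTop (𝓝 p) := hu1.comp hshift
  obtain ⟨ψ, hψ, hconv⟩ := C.Hmap_subconv (σ₀ := p.1) (x₀ := p.2) hσ₀ hx₀m.1 hx₀m.2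
    (σ := fun j => (u (ψ₀ j + N)).1) (x := fun j => (u (ψ₀ j + N)).2)
    (fun j => (hmem j).1) (fun j => (hmem j).2.1) (fun j => (hmem j).2.2)
    (((continuous_fst.tendsto p).comp huu)) (((continuous_snd.tendsto p).comp huu))
  have hconv' : Tendsto (fun i => (C.Hmap ∘ u) (ψ₀ (ψ i) + N)) atTop (𝓝 (C.Hmap p)) := by
    refine hconv.congr fun i => ?_
    show C.Hmap ((u (ψ₀ (ψ i) + N)).1, (u (ψ₀ (ψ i) + N)).2) = (C.Hmap ∘ u) (ψ₀ (ψ i) + N)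
    rw [Prod.mk.eta]
    rfl
  have hlt := (Metric.tendsto_atTop.1 hconv' ε hε)
  obtain ⟨N₂, hN₂⟩ := hlt
  have h1 := hN₂ N₂ (le_refl _)
  have h2 := hψ₀d (ψ N₂)
  exact absurd h1 (not_lt.2 h2)

/-- The Second Deformation Lemma, packaged form. -/
lemma main : IsStrongDeformationRetract
    {x ∈ C.φ.basin C.𝒜 | C.V x ≤ C.c} {x ∈ C.φ.basin C.𝒜 | C.V x ≤ C.b} := by
  refine ⟨fun x hx => ⟨hx.1, le_trans hx.2 (le_of_lt C.hb)⟩, C.Hmap, ?_, ?_, ?_, ?_, ?_⟩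
  · exact C.Hcont
  · exact fun x hx => C.Hmap_zero hx.1
  · intro x hx
    exact ⟨(C.Hmap_one hx.1).1, (C.Hmap_one hx.1).2⟩
  · exact fun σ hσ x hx => C.Hmap_of_le_c hx.1 hx.2 hσ.1 hσ.2
  · intro σ hσ x hx
    exact ⟨(C.Hmap_mem hx.1 hx.2 hσ.1 hσ.2).1, (C.Hmap_mem hx.1 hx.2 hσ.1 hσ.2).2⟩

end Ctx

end SDL
/-- Second Deformation Lemma: if the Morse set `M k₀` consists of exactly
one equilibrium `E`, `c = V E`, and the strict Morse–Lyapunov function `V` has no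
generalized critical values in `(c,b]`, then `V_c` is a strong deformation retract
of `V_b`. -/
theorem stmt19 {X : Type*} [MetricSpace X] [CompleteSpace X] (φ : Semiflow X)
    (hac : φ.AsympCompact) (𝒜 : Set X) (h𝒜 : φ.IsAttractor 𝒜)
    (l : ℕ) (hl : 1 ≤ l) (M : ℕ → Set X) (hMD : φ.IsMorseDecomposition 𝒜 l M)
    (V : X → ℝ) (hV : φ.IsStrictMorseLyapunov (φ.basin 𝒜) l M V)
    (k₀ : ℕ) (hk₀ : 1 ≤ k₀ ∧ k₀ ≤ l) (E : X)
    (hME : M k₀ = {E}) (hEq : ∀ t ≥ (0:ℝ), φ.toFun t E = E)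
    (c : ℝ) (hc : c = V E) (b : ℝ) (hb : c < b)
    (hcrit : ∀ k, 1 ≤ k → k ≤ l → ∀ x ∈ M k, V x ∉ Set.Ioc c b) :
    IsStrongDeformationRetract {x ∈ φ.basin 𝒜 | V x ≤ c} {x ∈ φ.basin 𝒜 | V x ≤ b} := by
  obtain ⟨hcomp, hinv, U, hU, hatt⟩ := h𝒜
  obtain ⟨A, _, hAl, hattr, _, hMk⟩ := hMD
  obtain ⟨⟨hVcont, _, hdec⟩, cv, hcv, hcvmono⟩ := hV
  exact SDL.Ctx.main
    { φ := φ, hac := hac, 𝒜 := 𝒜, hcomp := hcomp, hinv := hinv, U := U, hU := hU,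
      hatt := hatt, l := l, hl := hl, M := M, A := A, hattr := hattr,
      hMk := hMk, V := V, hVcont := hVcont, hdec := hdec, cv := cv, hcv := hcv,
      hcvmono := hcvmono, k₀ := k₀, hk₀1 := hk₀.1, hk₀l := hk₀.2, E := E, hME := hME,
      hEq := hEq, c := c, b := b, hc := hc, hb := hb, hcrit := hcrit }
end
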